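/- arXiv:2005.01949 — 2 statements merged into one kernel-verified Lean document; each statement's English description precedes it below -/
import Mathlib

section
/- Let p ≥ 2 and let {X_i, i ≥ 1} be a sequence of NA random variables with E[X_i] = 0 for all i, such that V_n := Σ_{i=1}^n E[|X_i|^p] and B_n := Σ_{i=1}^n E[X_i²] are each bounded by a constant multiple of n. Then for any x > 0 there exists a positive constant C_x not depending on n such that for all n ≥ 1, P(|S_n| > nx) ≤ C_x / n^{p−1}. -/
open MeasureTheory Finset

/-- A sequence `{X_i, i ≥ 1}` is negatively associated (NA): for every pair of disjoint
finite subsets `A₁, A₂` of `{1, 2, …}` and all coordinatewise nondecreasing functions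
`f₁, f₂`, one has `Cov(f₁(X_i, i ∈ A₁), f₂(X_j, j ∈ A₂)) ≤ 0` whenever the covariance
exists. -/
def NegAssoc {Ω : Type*} [MeasurableSpace Ω] (μ : Measure Ω) (X : ℕ → Ω → ℝ) : Prop :=
  ∀ A₁ A₂ : Finset ℕ, (∀ i ∈ A₁, 1 ≤ i) → (∀ j ∈ A₂, 1 ≤ j) → Disjoint A₁ A₂ →
    ∀ (f₁ : (↥A₁ → ℝ) → ℝ) (f₂ : (↥A₂ → ℝ) → ℝ), Monotone f₁ → Monotone f₂ →
      Integrable (fun ω => f₁ fun i => X i.1 ω) μ →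
      Integrable (fun ω => f₂ fun j => X j.1 ω) μ →
      Integrable (fun ω => (f₁ fun i => X i.1 ω) * (f₂ fun j => X j.1 ω)) μ →
      ∫ ω, (f₁ fun i => X i.1 ω) * (f₂ fun j => X j.1 ω) ∂μ ≤
        (∫ ω, (f₁ fun i => X i.1 ω) ∂μ) * ∫ ω, (f₂ fun j => X j.1 ω) ∂μ

/-- The partial sum `S_k = ∑_{i=1}^k X_i`. -/
def pSum {Ω : Type*} (X : ℕ → Ω → ℝ) (k : ℕ) (ω : Ω) : ℝ := ∑ i ∈ Finset.Icc 1 k, X i ω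


section Aux


lemma exp_le_quad_of_nonpos {s : ℝ} (hs : s ≤ 0) : Real.exp s ≤ 1 + s + s^2/2 := by
  have h : AntitoneOn (fun s : ℝ => 1 + s + s^2/2 - Real.exp s) (Set.Iic 0) := by
    apply antitoneOn_of_deriv_nonpos (convex_Iic 0)
    · fun_prop
    · fun_prop
    · intro t ht
      have hd : HasDerivAt (fun s : ℝ => 1 + s + s^2/2 - Real.exp s)
          (0 + 1 + t - Real.exp t) t := by
        have h1 : HasDerivAt (fun s : ℝ => 1 + s) (0 + 1) t :=
          (hasDerivAt_const t (1:ℝ)).add (hasDerivAt_id t)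
        have h2 := (hasDerivAt_pow 2 t).div_const 2
        exact (h1.add (by simpa using h2)).sub (Real.hasDerivAt_exp t)
      rw [hd.deriv]
      have := Real.add_one_le_exp t
      linarith
  have := h (Set.mem_Iic.2 hs) (Set.mem_Iic.2 le_rfl) hs
  simp at this
  linarith

lemma exp_le_quad_of_nonneg {s : ℝ} (hs : 0 ≤ s) : Real.exp s ≤ 1 + s + s^2/2 * Real.exp s := by
  have h : MonotoneOn (fun s : ℝ => (1 + s) * Real.exp (-s) + s^2/2) (Set.Ici 0) := by
    apply monotoneOn_of_deriv_nonneg (convex_Ici 0)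
    · fun_prop
    · fun_prop
    · intro t ht
      have hd : HasDerivAt (fun s : ℝ => (1 + s) * Real.exp (-s) + s^2/2)
          (1 * Real.exp (-t) + (1 + t) * (Real.exp (-t) * (-1)) + t) t := by
        have h1 : HasDerivAt (fun s : ℝ => Real.exp (-s)) (Real.exp (-t) * (-1)) t := by
          exact (Real.hasDerivAt_exp (-t)).comp t ((hasDerivAt_id t).neg)
        have h2 : HasDerivAt (fun s : ℝ => (1 + s)) 1 t := by
          simpa using (hasDerivAt_id t).const_add 1
        have := (h2.mul h1).add ((hasDerivAt_pow 2 t).div_const 2)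
        exact this.congr_deriv (by norm_num)
      rw [hd.deriv]
      have ht' : 0 ≤ t := Set.mem_Ici.1 (interior_subset ht)
      have h3 : Real.exp (-t) ≤ 1 := Real.exp_le_one_iff.2 (by linarith)
      nlinarith [Real.exp_pos (-t)]
  have := h (Set.mem_Ici.2 le_rfl) (Set.mem_Ici.2 hs) hs
  simp at this
  have hpos := Real.exp_pos s
  have hne : Real.exp (-s) = (Real.exp s)⁻¹ := by rw [Real.exp_neg]
  rw [hne] at this
  have h4 := mul_le_mul_of_nonneg_right this (le_of_lt hpos)
  have h5 : (1 + s) * (Real.exp s)⁻¹ * Real.exp s = 1 + s := by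
    field_simp
  calc Real.exp s = 1 * Real.exp s := (one_mul _).symm
    _ ≤ ((1 + s) * (Real.exp s)⁻¹ + s ^ 2 / 2) * Real.exp s := h4
    _ = (1 + s) * (Real.exp s)⁻¹ * Real.exp s + s^2/2 * Real.exp s := by ring
    _ = 1 + s + s^2/2 * Real.exp s := by rw [h5]

lemma exp_le_quad {s c : ℝ} (h : |s| ≤ c) : Real.exp s ≤ 1 + s + s^2/2 * Real.exp c := by
  have hc : 0 ≤ c := le_trans (abs_nonneg s) h
  have hec : 1 ≤ Real.exp c := Real.one_le_exp hc
  have hs2 : 0 ≤ s^2/2 := by positivity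
  rcases le_or_gt s 0 with hs | hs
  · have := exp_le_quad_of_nonpos hs
    nlinarith
  · have := exp_le_quad_of_nonneg hs.le
    have hsc : Real.exp s ≤ Real.exp c := Real.exp_le_exp.2 (le_trans (le_abs_self s) h)
    nlinarith

noncomputable def clampR (y r : ℝ) : ℝ := max (-y) (min r y)

lemma clampR_mono (y : ℝ) : Monotone (clampR y) :=
  fun _ _ h => max_le_max le_rfl (min_le_min h le_rfl)

lemma clampR_meas (y : ℝ) : Measurable (clampR y) :=
  measurable_const.max (measurable_id.min measurable_const)

lemma abs_clampR_le {y : ℝ} (hy : 0 ≤ y) (r : ℝ) : |clampR y r| ≤ y := by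
  rw [abs_le]; exact ⟨le_max_left _ _, max_le (by linarith) (min_le_right _ _)⟩

lemma clampR_eq_self {y r : ℝ} (h : |r| ≤ y) : clampR y r = r := by
  rw [abs_le] at h
  rw [clampR, min_eq_left h.2, max_eq_right h.1]

lemma abs_clampR_le_abs {y : ℝ} (hy : 0 ≤ y) (r : ℝ) : |clampR y r| ≤ |r| := by
  rcases le_or_gt (|r|) y with h | h
  · rw [clampR_eq_self h]
  · exact (abs_clampR_le hy r).trans h.le

lemma abs_clampR_sub_le {y r : ℝ} (hy : 0 < y) {p : ℝ} (hp : 1 ≤ p) :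
    |clampR y r - r| * y ^ (p - 1) ≤ |r| ^ p := by
  rcases le_or_gt (|r|) y with h | h
  · rw [clampR_eq_self h]
    simp
    positivity
  · have h1 : |clampR y r - r| ≤ |r| := by
      rcases le_or_gt r y with h2 | h2
      · have h3 : r < -y := by
          by_contra hc; push_neg at hc
          exact absurd (abs_le.2 ⟨hc, h2⟩) (not_le.2 h)
        have hcl : clampR y r = -y := by
          rw [clampR, min_eq_left h2, max_eq_left h3.le]
        rw [hcl, abs_of_nonneg (by linarith : (0:ℝ) ≤ -y - r), abs_of_neg (by linarith : r < 0)]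
        linarith
      · have hcl : clampR y r = y := by
          rw [clampR, min_eq_right h2.le, max_eq_right (by linarith)]
        rw [hcl, abs_of_nonpos (by linarith : y - r ≤ 0), abs_of_pos (by linarith : 0 < r)]
        linarith
    calc |clampR y r - r| * y ^ (p-1) ≤ |r| * |r| ^ (p-1) := by
          apply mul_le_mul h1 (Real.rpow_le_rpow hy.le h.le (by linarith)) (by positivity) (abs_nonneg r)
      _ = |r| ^ (1 + (p-1)) := by
          rw [Real.rpow_add (hy.trans h) 1 (p-1), Real.rpow_one]
      _ = |r| ^ p := by ring_nf

section C
variable {Ω : Type*} [MeasurableSpace Ω] (μ : Measure Ω) [IsProbabilityMeasure μ]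

lemma integrable_of_bdd {f : Ω → ℝ} (hm : Measurable f) {M : ℝ} (hb : ∀ ω, |f ω| ≤ M) :
    Integrable f μ :=
  (integrable_const M).mono' hm.aestronglyMeasurable (ae_of_all _ fun ω => by
    simpa [Real.norm_eq_abs] using hb ω)

/-- per-variable mgf bound -/
lemma mgf_bound {V : Ω → ℝ} (hm : Measurable V) {a : ℝ} (hb : ∀ ω, |V ω| ≤ a)
    (hmean : ∫ ω, V ω ∂μ = 0) :
    ∫ ω, Real.exp (V ω) ∂μ ≤ Real.exp (Real.exp a / 2 * ∫ ω, (V ω)^2 ∂μ) := by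
  have hne : Nonempty Ω := by
    by_contra hc
    have : μ Set.univ = 0 := by
      rw [Set.univ_eq_empty_iff.2 (not_nonempty_iff.1 hc)]
      exact measure_empty
    simp [measure_univ] at this
  have ha : 0 ≤ a := le_trans (abs_nonneg _) (hb (Classical.arbitrary Ω))
  have hintV : Integrable V μ := integrable_of_bdd μ hm hb
  have hintV2 : Integrable (fun ω => (V ω)^2) μ :=
    integrable_of_bdd μ (hm.pow_const 2) (M := a^2) (fun ω => by
      rw [abs_of_nonneg (sq_nonneg _)]
      exact sq_le_sq' (abs_le.1 (hb ω)).1 (abs_le.1 (hb ω)).2)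
  have hintE : Integrable (fun ω => Real.exp (V ω)) μ :=
    integrable_of_bdd μ (by fun_prop) (M := Real.exp a) (fun ω => by
      rw [abs_of_pos (Real.exp_pos _)]
      exact Real.exp_le_exp.2 ((le_abs_self _).trans (hb ω)))
  have step1 : ∫ ω, Real.exp (V ω) ∂μ ≤ ∫ ω, (1 + V ω + (V ω)^2/2 * Real.exp a) ∂μ := by
    apply integral_mono hintE _ (fun ω => exp_le_quad (hb ω))
    exact ((integrable_const 1).add hintV).add ((hintV2.div_const 2).mul_const _)
  have step2 : ∫ ω, (1 + V ω + (V ω)^2/2 * Real.exp a) ∂μ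
      = 1 + (Real.exp a / 2) * ∫ ω, (V ω)^2 ∂μ := by
    have i1 : Integrable (fun ω => 1 + V ω) μ := (integrable_const 1).add hintV
    have i2 : Integrable (fun ω => (V ω)^2/2 * Real.exp a) μ := (hintV2.div_const 2).mul_const _
    rw [integral_add i1 i2, integral_add (integrable_const 1) hintV, hmean, integral_const]
    simp [measure_univ]
    rw [← integral_const_mul]
    congr 1
    ext ω
    ring
  have step3 : (1:ℝ) + (Real.exp a / 2) * ∫ ω, (V ω)^2 ∂μ
      ≤ Real.exp ((Real.exp a / 2) * ∫ ω, (V ω)^2 ∂μ) := by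
    have := Real.add_one_le_exp ((Real.exp a / 2) * ∫ ω, (V ω)^2 ∂μ)
    linarith
  calc ∫ ω, Real.exp (V ω) ∂μ ≤ _ := step1
    _ = _ := step2
    _ ≤ _ := step3

lemma chernoff {T : Ω → ℝ} (hm : Measurable T) {M t lam : ℝ} (hb : ∀ ω, |T ω| ≤ M)
    (hlam : 0 ≤ lam) :
    (μ {ω | t < T ω}).toReal ≤ Real.exp (-(lam * t)) * ∫ ω, Real.exp (lam * T ω) ∂μ := by
  have hint : Integrable (fun ω => Real.exp (lam * T ω)) μ :=
    integrable_of_bdd μ (by fun_prop) (M := Real.exp (lam * M)) (fun ω => by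
      rw [abs_of_pos (Real.exp_pos _)]
      exact Real.exp_le_exp.2 (mul_le_mul_of_nonneg_left ((le_abs_self _).trans (hb ω)) hlam))
  have hsub : {ω | t < T ω} ⊆ {ω | Real.exp (lam * t) ≤ Real.exp (lam * T ω)} := by
    intro ω hω
    exact Real.exp_le_exp.2 (mul_le_mul_of_nonneg_left (le_of_lt hω) hlam)
  have h1 : (μ {ω | t < T ω}).toReal ≤ (μ {ω | Real.exp (lam * t) ≤ Real.exp (lam * T ω)}).toReal :=
    ENNReal.toReal_mono (measure_ne_top μ _) (measure_mono hsub)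
  have h2 := mul_meas_ge_le_integral_of_nonneg (μ := μ)
    (f := fun ω => Real.exp (lam * T ω)) (ae_of_all _ fun ω => (Real.exp_pos _).le)
    hint (Real.exp (lam * t))
  have hep : (0:ℝ) < Real.exp (lam * t) := Real.exp_pos _
  rw [Real.exp_neg]
  rw [← le_div_iff₀' hep] at h2
  calc (μ {ω | t < T ω}).toReal ≤ _ := h1
    _ ≤ (∫ ω, Real.exp (lam * T ω) ∂μ) / Real.exp (lam * t) := h2
    _ = (Real.exp (lam * t))⁻¹ * ∫ ω, Real.exp (lam * T ω) ∂μ := by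
        rw [div_eq_mul_inv, mul_comm]

end C
section D
variable {Ω : Type*} [MeasurableSpace Ω] {μ : Measure Ω} [IsProbabilityMeasure μ] {X : ℕ → Ω → ℝ}

lemma integrable_of_bdd' {f : Ω → ℝ} (hm : Measurable f) {M : ℝ} (hb : ∀ ω, |f ω| ≤ M) :
    Integrable f μ :=
  (integrable_const M).mono' hm.aestronglyMeasurable (ae_of_all _ fun ω => by
    simpa [Real.norm_eq_abs] using hb ω)

lemma na_pair_anti (hNA : NegAssoc μ X) (A₁ A₂ : Finset ℕ) (h1 : ∀ i ∈ A₁, 1 ≤ i)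
    (h2 : ∀ j ∈ A₂, 1 ≤ j) (hd : Disjoint A₁ A₂)
    (f₁ : (↥A₁ → ℝ) → ℝ) (f₂ : (↥A₂ → ℝ) → ℝ) (ha₁ : Antitone f₁) (ha₂ : Antitone f₂)
    (I1 : Integrable (fun ω => f₁ fun i => X i.1 ω) μ)
    (I2 : Integrable (fun ω => f₂ fun j => X j.1 ω) μ)
    (I12 : Integrable (fun ω => (f₁ fun i => X i.1 ω) * (f₂ fun j => X j.1 ω)) μ) :
    ∫ ω, (f₁ fun i => X i.1 ω) * (f₂ fun j => X j.1 ω) ∂μ ≤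
      (∫ ω, (f₁ fun i => X i.1 ω) ∂μ) * ∫ ω, (f₂ fun j => X j.1 ω) ∂μ := by
  have key := hNA A₁ A₂ h1 h2 hd (fun v => -f₁ v) (fun v => -f₂ v)
    (fun a b hab => neg_le_neg (ha₁ hab)) (fun a b hab => neg_le_neg (ha₂ hab))
    I1.neg I2.neg (by simpa [neg_mul_neg] using I12)
  simp only [neg_mul_neg, integral_neg, neg_mul_neg] at key
  exact key

lemma na_prod_mono (hNA : NegAssoc μ X) (hmeas : ∀ i, Measurable (X i))
    (g : ℕ → ℝ → ℝ) (hmono : ∀ i, Monotone (g i)) (hmeasg : ∀ i, Measurable (g i))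
    (hnn : ∀ i r, 0 ≤ g i r) (M : ℕ → ℝ) (hbd : ∀ i r, g i r ≤ M i) (n : ℕ) :
    ∫ ω, ∏ i ∈ Icc 1 n, g i (X i ω) ∂μ ≤ ∏ i ∈ Icc 1 n, ∫ ω, g i (X i ω) ∂μ := by
  induction n with
  | zero => simp
  | succ n ih =>
    have hnotmem : (n+1) ∉ Icc 1 n := by simp
    have hicc : Icc 1 (n+1) = insert (n+1) (Icc 1 n) := by
      ext k; simp [Finset.mem_Icc, Finset.mem_insert]; omega
    set A₁ : Finset ℕ := Icc 1 n with hA₁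
    have hj0 : (n+1) ∈ ({n+1} : Finset ℕ) := mem_singleton_self _
    set f₁ : (↥A₁ → ℝ) → ℝ := fun v => ∏ i ∈ A₁.attach, g i.1 (v i) with hf₁
    set f₂ : (↥({n+1} : Finset ℕ) → ℝ) → ℝ := fun v => g (n+1) (v ⟨n+1, hj0⟩) with hf₂
    have hf₁eq : ∀ ω, (f₁ fun i => X i.1 ω) = ∏ i ∈ A₁, g i (X i ω) := by
      intro ω
      rw [hf₁]
      exact Finset.prod_attach A₁ (fun i => g i (X i ω))
    have hf₂eq : ∀ ω, (f₂ fun j => X j.1 ω) = g (n+1) (X (n+1) ω) := fun ω => rfl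
    have hMnn : ∀ i, 0 ≤ M i := fun i => le_trans (hnn i 0) (hbd i 0)
    have hm₁ : Measurable (fun ω => ∏ i ∈ A₁, g i (X i ω)) :=
      Finset.measurable_prod _ (fun i _ => (hmeasg i).comp (hmeas i))
    have hb₁ : ∀ ω, |∏ i ∈ A₁, g i (X i ω)| ≤ ∏ i ∈ A₁, M i := by
      intro ω
      rw [abs_of_nonneg (Finset.prod_nonneg (fun i _ => hnn i _))]
      exact Finset.prod_le_prod (fun i _ => hnn i _) (fun i _ => hbd i _)
    have I1 : Integrable (fun ω => f₁ fun i => X i.1 ω) μ := by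
      simp only [hf₁eq]
      exact integrable_of_bdd' hm₁ hb₁
    have I2 : Integrable (fun ω => f₂ fun j => X j.1 ω) μ := by
      simp only [hf₂eq]
      exact integrable_of_bdd' ((hmeasg _).comp (hmeas _)) (fun ω => by
        rw [abs_of_nonneg (hnn _ _)]; exact hbd _ _)
    have I12 : Integrable (fun ω => (f₁ fun i => X i.1 ω) * (f₂ fun j => X j.1 ω)) μ := by
      simp only [hf₁eq, hf₂eq]
      exact integrable_of_bdd' (hm₁.mul ((hmeasg _).comp (hmeas _)))
        (M := (∏ i ∈ A₁, M i) * M (n+1)) (fun ω => by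
          rw [abs_mul]
          exact mul_le_mul (hb₁ ω) (by rw [abs_of_nonneg (hnn _ _)]; exact hbd _ _)
            (abs_nonneg _) (Finset.prod_nonneg (fun i _ => hMnn i)))
    have key := hNA A₁ {n+1} (fun i hi => (Finset.mem_Icc.1 hi).1)
      (fun j hj => by simp at hj; omega)
      (by simp [Finset.disjoint_singleton_right, hA₁])
      f₁ f₂
      (fun v w hvw => Finset.prod_le_prod (fun i _ => hnn _ _)
        (fun i _ => hmono i.1 (hvw i)))
      (fun v w hvw => hmono (n+1) (hvw ⟨n+1, hj0⟩))
      I1 I2 I12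
    simp only [hf₁eq, hf₂eq] at key
    have hint2 : (0:ℝ) ≤ ∫ ω, g (n+1) (X (n+1) ω) ∂μ :=
      integral_nonneg (fun ω => hnn _ _)
    calc ∫ ω, ∏ i ∈ Icc 1 (n+1), g i (X i ω) ∂μ
        = ∫ ω, (∏ i ∈ A₁, g i (X i ω)) * g (n+1) (X (n+1) ω) ∂μ := by
          congr 1; ext ω; rw [hicc, Finset.prod_insert hnotmem, mul_comm]
      _ ≤ (∫ ω, ∏ i ∈ A₁, g i (X i ω) ∂μ) * ∫ ω, g (n+1) (X (n+1) ω) ∂μ := key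
      _ ≤ (∏ i ∈ A₁, ∫ ω, g i (X i ω) ∂μ) * ∫ ω, g (n+1) (X (n+1) ω) ∂μ :=
          mul_le_mul_of_nonneg_right ih hint2
      _ = ∏ i ∈ Icc 1 (n+1), ∫ ω, g i (X i ω) ∂μ := by
          rw [hicc, Finset.prod_insert hnotmem, mul_comm]

lemma na_prod_anti (hNA : NegAssoc μ X) (hmeas : ∀ i, Measurable (X i))
    (g : ℕ → ℝ → ℝ) (hanti : ∀ i, Antitone (g i)) (hmeasg : ∀ i, Measurable (g i))
    (hnn : ∀ i r, 0 ≤ g i r) (M : ℕ → ℝ) (hbd : ∀ i r, g i r ≤ M i) (n : ℕ) :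
    ∫ ω, ∏ i ∈ Icc 1 n, g i (X i ω) ∂μ ≤ ∏ i ∈ Icc 1 n, ∫ ω, g i (X i ω) ∂μ := by
  induction n with
  | zero => simp
  | succ n ih =>
    have hnotmem : (n+1) ∉ Icc 1 n := by simp
    have hicc : Icc 1 (n+1) = insert (n+1) (Icc 1 n) := by
      ext k; simp [Finset.mem_Icc, Finset.mem_insert]; omega
    set A₁ : Finset ℕ := Icc 1 n with hA₁
    have hj0 : (n+1) ∈ ({n+1} : Finset ℕ) := mem_singleton_self _
    set f₁ : (↥A₁ → ℝ) → ℝ := fun v => ∏ i ∈ A₁.attach, g i.1 (v i) with hf₁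
    set f₂ : (↥({n+1} : Finset ℕ) → ℝ) → ℝ := fun v => g (n+1) (v ⟨n+1, hj0⟩) with hf₂
    have hf₁eq : ∀ ω, (f₁ fun i => X i.1 ω) = ∏ i ∈ A₁, g i (X i ω) := by
      intro ω
      rw [hf₁]
      exact Finset.prod_attach A₁ (fun i => g i (X i ω))
    have hf₂eq : ∀ ω, (f₂ fun j => X j.1 ω) = g (n+1) (X (n+1) ω) := fun ω => rfl
    have hMnn : ∀ i, 0 ≤ M i := fun i => le_trans (hnn i 0) (hbd i 0)
    have hm₁ : Measurable (fun ω => ∏ i ∈ A₁, g i (X i ω)) :=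
      Finset.measurable_prod _ (fun i _ => (hmeasg i).comp (hmeas i))
    have hb₁ : ∀ ω, |∏ i ∈ A₁, g i (X i ω)| ≤ ∏ i ∈ A₁, M i := by
      intro ω
      rw [abs_of_nonneg (Finset.prod_nonneg (fun i _ => hnn i _))]
      exact Finset.prod_le_prod (fun i _ => hnn i _) (fun i _ => hbd i _)
    have I1 : Integrable (fun ω => f₁ fun i => X i.1 ω) μ := by
      simp only [hf₁eq]
      exact integrable_of_bdd' hm₁ hb₁
    have I2 : Integrable (fun ω => f₂ fun j => X j.1 ω) μ := by
      simp only [hf₂eq]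
      exact integrable_of_bdd' ((hmeasg _).comp (hmeas _)) (fun ω => by
        rw [abs_of_nonneg (hnn _ _)]; exact hbd _ _)
    have I12 : Integrable (fun ω => (f₁ fun i => X i.1 ω) * (f₂ fun j => X j.1 ω)) μ := by
      simp only [hf₁eq, hf₂eq]
      exact integrable_of_bdd' (hm₁.mul ((hmeasg _).comp (hmeas _)))
        (M := (∏ i ∈ A₁, M i) * M (n+1)) (fun ω => by
          rw [abs_mul]
          exact mul_le_mul (hb₁ ω) (by rw [abs_of_nonneg (hnn _ _)]; exact hbd _ _)
            (abs_nonneg _) (Finset.prod_nonneg (fun i _ => hMnn i)))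
    have key := na_pair_anti hNA A₁ {n+1} (fun i hi => (Finset.mem_Icc.1 hi).1)
      (fun j hj => by simp at hj; omega)
      (by simp [Finset.disjoint_singleton_right, hA₁])
      f₁ f₂
      (fun v w hvw => Finset.prod_le_prod (fun i _ => hnn _ _)
        (fun i _ => hanti i.1 (hvw i)))
      (fun v w hvw => hanti (n+1) (hvw ⟨n+1, hj0⟩))
      I1 I2 I12
    simp only [hf₁eq, hf₂eq] at key
    have hint2 : (0:ℝ) ≤ ∫ ω, g (n+1) (X (n+1) ω) ∂μ :=
      integral_nonneg (fun ω => hnn _ _)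
    calc ∫ ω, ∏ i ∈ Icc 1 (n+1), g i (X i ω) ∂μ
        = ∫ ω, (∏ i ∈ A₁, g i (X i ω)) * g (n+1) (X (n+1) ω) ∂μ := by
          congr 1; ext ω; rw [hicc, Finset.prod_insert hnotmem, mul_comm]
      _ ≤ (∫ ω, ∏ i ∈ A₁, g i (X i ω) ∂μ) * ∫ ω, g (n+1) (X (n+1) ω) ∂μ := key
      _ ≤ (∏ i ∈ A₁, ∫ ω, g i (X i ω) ∂μ) * ∫ ω, g (n+1) (X (n+1) ω) ∂μ :=
          mul_le_mul_of_nonneg_right ih hint2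
      _ = ∏ i ∈ Icc 1 (n+1), ∫ ω, g i (X i ω) ∂μ := by
          rw [hicc, Finset.prod_insert hnotmem, mul_comm]

lemma tail_bound (hNA : NegAssoc μ X) (hmeas : ∀ i, Measurable (X i))
    {y lam t : ℝ} (hy : 0 < y) (hlam : 0 ≤ lam) (n : ℕ) {s : ℝ} (hs : s = 1 ∨ s = -1)
    {Bs : ℝ}
    (hBs : ∑ i ∈ Icc 1 n,
        ∫ ω, (clampR y (X i ω) - ∫ ω', clampR y (X i ω') ∂μ)^2 ∂μ ≤ Bs) :
    (μ {ω | t < s * ∑ i ∈ Icc 1 n,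
        (clampR y (X i ω) - ∫ ω', clampR y (X i ω') ∂μ)}).toReal ≤
      Real.exp (-(lam * t) + Real.exp (lam * (2*y))/2 * lam^2 * Bs) := by
  set m : ℕ → ℝ := fun i => ∫ ω', clampR y (X i ω') ∂μ with hm
  set a : ℝ := lam * (2*y) with ha
  have ha0 : 0 ≤ a := mul_nonneg hlam (by linarith)
  have hs2 : s^2 = 1 := by rcases hs with h | h <;> rw [h] <;> norm_num
  have habs : |s| = 1 := by rcases hs with h | h <;> rw [h] <;> norm_num
  have hYmeas : ∀ i, Measurable (fun ω => clampR y (X i ω)) :=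
    fun i => (clampR_meas y).comp (hmeas i)
  have hYb : ∀ i ω, |clampR y (X i ω)| ≤ y := fun i ω => abs_clampR_le hy.le _
  have hYint : ∀ i, Integrable (fun ω => clampR y (X i ω)) μ :=
    fun i => integrable_of_bdd μ (hYmeas i) (hYb i)
  have hmb : ∀ i, |m i| ≤ y := by
    intro i
    rw [hm]
    calc |∫ ω', clampR y (X i ω') ∂μ| = ‖∫ ω', clampR y (X i ω') ∂μ‖ :=
          (Real.norm_eq_abs _).symm
      _ ≤ ∫ ω', ‖clampR y (X i ω')‖ ∂μ := norm_integral_le_integral_norm _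
      _ = ∫ ω', |clampR y (X i ω')| ∂μ := by simp [Real.norm_eq_abs]
      _ ≤ ∫ _ω', y ∂μ := integral_mono (hYint i).abs (integrable_const y) (hYb i)
      _ = y := by simp [measure_univ]
  have hZb : ∀ i ω, |clampR y (X i ω) - m i| ≤ 2*y := by
    intro i ω
    calc |clampR y (X i ω) - m i| ≤ |clampR y (X i ω)| + |m i| := abs_sub _ _
      _ ≤ y + y := add_le_add (hYb i ω) (hmb i)
      _ = 2*y := by ring
  have hVb : ∀ i ω, |lam * s * (clampR y (X i ω) - m i)| ≤ a := by
    intro i ω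
    rw [abs_mul, abs_mul, abs_of_nonneg hlam, habs, mul_one, ha]
    exact mul_le_mul_of_nonneg_left (hZb i ω) hlam
  have hVmean : ∀ i, ∫ ω, lam * s * (clampR y (X i ω) - m i) ∂μ = 0 := by
    intro i
    rw [integral_const_mul, integral_sub (hYint i) (integrable_const _), integral_const]
    simp [measure_univ, hm]
  have hVmeas : ∀ i, Measurable (fun ω => lam * s * (clampR y (X i ω) - m i)) :=
    fun i => (measurable_const.mul ((hYmeas i).sub measurable_const))
  have key_i : ∀ i, ∫ ω, Real.exp (lam * s * (clampR y (X i ω) - m i)) ∂μ ≤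
      Real.exp (Real.exp a / 2 * (lam^2 * ∫ ω, (clampR y (X i ω) - m i)^2 ∂μ)) := by
    intro i
    have h1 := mgf_bound μ (hVmeas i) (hVb i) (hVmean i)
    have h2 : ∫ ω, (lam * s * (clampR y (X i ω) - m i))^2 ∂μ
        = lam^2 * ∫ ω, (clampR y (X i ω) - m i)^2 ∂μ := by
      rw [← integral_const_mul]
      congr 1; ext ω; rw [mul_pow, mul_pow, hs2]; ring
    rw [h2] at h1
    exact h1
  -- product step
  set g : ℕ → ℝ → ℝ := fun i r => Real.exp (lam * s * (clampR y r - m i)) with hg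
  have hgnn : ∀ i r, 0 ≤ g i r := fun i r => (Real.exp_pos _).le
  have hgmeas : ∀ i, Measurable (g i) := by
    intro i
    apply Real.measurable_exp.comp
    exact (measurable_const.mul ((clampR_meas y).sub measurable_const))
  have hgbd : ∀ i r, g i r ≤ Real.exp a := by
    intro i r
    apply Real.exp_le_exp.2
    calc lam * s * (clampR y r - m i) ≤ |lam * s * (clampR y r - m i)| := le_abs_self _
      _ ≤ a := by
        rw [abs_mul, abs_mul, abs_of_nonneg hlam, habs, mul_one, ha]
        apply mul_le_mul_of_nonneg_left _ hlam
        calc |clampR y r - m i| ≤ |clampR y r| + |m i| := abs_sub _ _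
          _ ≤ y + y := add_le_add (abs_clampR_le hy.le r) (hmb i)
          _ = 2*y := by ring
  have prod_le : ∫ ω, ∏ i ∈ Icc 1 n, g i (X i ω) ∂μ ≤ ∏ i ∈ Icc 1 n, ∫ ω, g i (X i ω) ∂μ := by
    rcases hs with h | h
    · apply na_prod_mono hNA hmeas g _ hgmeas hgnn (fun _ => Real.exp a) hgbd n
      intro i r1 r2 hr
      apply Real.exp_le_exp.2
      rw [h]
      have hc := mul_le_mul_of_nonneg_left
        (sub_le_sub_right (clampR_mono y hr) (m i)) hlam
      calc lam * 1 * (clampR y r1 - m i) = lam * (clampR y r1 - m i) := by ring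
        _ ≤ lam * (clampR y r2 - m i) := hc
        _ = lam * 1 * (clampR y r2 - m i) := by ring
    · apply na_prod_anti hNA hmeas g _ hgmeas hgnn (fun _ => Real.exp a) hgbd n
      intro i r1 r2 hr
      apply Real.exp_le_exp.2
      rw [h]
      have hc := mul_le_mul_of_nonneg_left
        (sub_le_sub_right (clampR_mono y hr) (m i)) hlam
      calc lam * -1 * (clampR y r2 - m i) = -(lam * (clampR y r2 - m i)) := by ring
        _ ≤ -(lam * (clampR y r1 - m i)) := neg_le_neg hc
        _ = lam * -1 * (clampR y r1 - m i) := by ring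
  -- chernoff
  set T : Ω → ℝ := fun ω => ∑ i ∈ Icc 1 n, (clampR y (X i ω) - m i) with hT
  have hTmeas : Measurable fun ω => s * T ω := by
    apply measurable_const.mul
    rw [hT]
    exact Finset.measurable_sum _ (fun i _ => (hYmeas i).sub measurable_const)
  have hTb : ∀ ω, |s * T ω| ≤ (n:ℝ) * (2*y) := by
    intro ω
    rw [abs_mul, habs, one_mul, hT]
    calc |∑ i ∈ Icc 1 n, (clampR y (X i ω) - m i)|
        ≤ ∑ i ∈ Icc 1 n, |clampR y (X i ω) - m i| := Finset.abs_sum_le_sum_abs _ _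
      _ ≤ ∑ _i ∈ Icc 1 n, 2*y := Finset.sum_le_sum (fun i _ => hZb i _)
      _ = (n:ℝ) * (2*y) := by
          rw [Finset.sum_const, Nat.card_Icc]
          simp [nsmul_eq_mul]
  have step0 := chernoff μ hTmeas (t := t) hTb hlam
  show (μ {ω | t < s * T ω}).toReal ≤
    Real.exp (-(lam * t) + Real.exp a / 2 * lam ^ 2 * Bs)
  have expand : ∀ ω, Real.exp (lam * (s * T ω)) = ∏ i ∈ Icc 1 n, g i (X i ω) := by
    intro ω
    rw [hT, Finset.mul_sum, Finset.mul_sum, Real.exp_sum]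
    apply Finset.prod_congr rfl
    intro i _
    rw [hg]
    ring_nf
  calc (μ {ω | t < s * T ω}).toReal
      ≤ Real.exp (-(lam * t)) * ∫ ω, Real.exp (lam * (s * T ω)) ∂μ := step0
    _ = Real.exp (-(lam * t)) * ∫ ω, ∏ i ∈ Icc 1 n, g i (X i ω) ∂μ := by
        congr 1; exact integral_congr_ae (ae_of_all _ expand)
    _ ≤ Real.exp (-(lam * t)) * ∏ i ∈ Icc 1 n, ∫ ω, g i (X i ω) ∂μ :=
        mul_le_mul_of_nonneg_left prod_le (Real.exp_pos _).le
    _ ≤ Real.exp (-(lam * t)) * ∏ i ∈ Icc 1 n,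
          Real.exp (Real.exp a / 2 * (lam^2 * ∫ ω, (clampR y (X i ω) - m i)^2 ∂μ)) := by
        apply mul_le_mul_of_nonneg_left _ (Real.exp_pos _).le
        exact Finset.prod_le_prod (fun i _ => integral_nonneg (fun ω => hgnn i _)) (fun i _ => key_i i)
    _ ≤ Real.exp (-(lam * t) + Real.exp a / 2 * lam ^ 2 * Bs) := by
        rw [← Real.exp_sum, ← Real.exp_add]
        apply Real.exp_le_exp.2
        have : ∑ i ∈ Icc 1 n, Real.exp a / 2 * (lam^2 * ∫ ω, (clampR y (X i ω) - m i)^2 ∂μ)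
            = Real.exp a / 2 * lam^2 * ∑ i ∈ Icc 1 n, ∫ ω, (clampR y (X i ω) - m i)^2 ∂μ := by
          rw [Finset.mul_sum]
          apply Finset.sum_congr rfl
          intro i _; ring
        rw [this]
        have hfac : (0:ℝ) ≤ Real.exp (lam*(2*y)) / 2 * lam^2 := by positivity
        have := mul_le_mul_of_nonneg_left hBs hfac
        linarith


end D
end Aux

set_option maxHeartbeats 1000000 in
/-- Remark: see module docstring. -/
theorem stmt8 {Ω : Type*} [MeasurableSpace Ω] (μ : Measure Ω) [IsProbabilityMeasure μ]
    (X : ℕ → Ω → ℝ) (hmeas : ∀ i, Measurable (X i)) (hNA : NegAssoc μ X)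
    (hint : ∀ i, 1 ≤ i → Integrable (X i) μ)
    (hmean : ∀ i, 1 ≤ i → ∫ ω, X i ω ∂μ = 0)
    (p : ℝ) (hp : 2 ≤ p)
    (hV : ∀ i, 1 ≤ i → Integrable (fun ω => |X i ω| ^ p) μ)
    (hB : ∀ i, 1 ≤ i → Integrable (fun ω => X i ω ^ 2) μ)
    (CV CB : ℝ)
    (hCV : ∀ n : ℕ, (∑ i ∈ Finset.Icc 1 n, ∫ ω, |X i ω| ^ p ∂μ) ≤ CV * n)
    (hCB : ∀ n : ℕ, (∑ i ∈ Finset.Icc 1 n, ∫ ω, X i ω ^ 2 ∂μ) ≤ CB * n)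
    (x : ℝ) (hx : 0 < x) :
    ∃ C : ℝ, 0 < C ∧ ∀ n : ℕ, 1 ≤ n →
      (μ {ω | (n : ℝ) * x < |pSum X n ω|}).toReal ≤ C / (n : ℝ) ^ (p - 1) := by
  have hCV' : ∀ n : ℕ, (∑ i ∈ Finset.Icc 1 n, ∫ ω, |X i ω| ^ p ∂μ) ≤ (CV+1) * n := by
    intro n
    have h1 := hCV n
    have hn0 : (0:ℝ) ≤ n := Nat.cast_nonneg n
    have h2 : CV * n ≤ (CV+1) * n := by
      have : CV * (n:ℝ) + 0 ≤ CV * n + n := by linarith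
      linarith [this]
    linarith
  have hCB' : ∀ n : ℕ, (∑ i ∈ Finset.Icc 1 n, ∫ ω, X i ω ^ 2 ∂μ) ≤ (CB+1) * n := by
    intro n
    have h1 := hCB n
    have hn0 : (0:ℝ) ≤ n := Nat.cast_nonneg n
    have h2 : CB * n ≤ (CB+1) * n := by
      have : CB * (n:ℝ) + 0 ≤ CB * n + n := by linarith
      linarith [this]
    linarith
  have hCV0 : 0 ≤ CV := by
    have h1 := hCV 1
    have h2 : (0:ℝ) ≤ ∫ ω, |X 1 ω| ^ p ∂μ :=
      integral_nonneg (fun ω => Real.rpow_nonneg (abs_nonneg _) p)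
    simp [Finset.Icc_self] at h1
    linarith
  have hCB0 : 0 ≤ CB := by
    have h1 := hCB 1
    have h2 : (0:ℝ) ≤ ∫ ω, X 1 ω ^ 2 ∂μ := integral_nonneg (fun ω => sq_nonneg _)
    simp [Finset.Icc_self] at h1
    linarith
  set CV' : ℝ := CV + 1 with hCV'def
  set D : ℝ := CB + 1 with hDdef
  have hCV'pos : 0 < CV' := by simp [hCV'def]; linarith
  have hDpos : 0 < D := by simp [hDdef]; linarith
  have hppos : 0 < p := by linarith
  set R : ℝ := max 1 (2*CV'/x) with hRdef
  set N₀ : ℕ := ⌈(8*p/x) * R⌉₊ + 1 with hN₀def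
  set C₂ : ℝ := 32 * D * p^2 / x^2 with hC₂def
  set q : ℝ := 8*p/x with hqdef
  have hq : 0 < q := by positivity
  have hqp : 0 < q ^ p := Real.rpow_pos_of_pos hq p
  set C : ℝ := CV' * q^p + 2*Real.exp C₂ + (N₀:ℝ)^(p-1) + 1 with hCdef
  have hCpos : 0 < C := by
    have h1 : 0 ≤ (N₀:ℝ)^(p-1) := Real.rpow_nonneg (Nat.cast_nonneg _) _
    have h2 : 0 < Real.exp C₂ := Real.exp_pos _
    have h3 : 0 < CV' * q^p := mul_pos hCV'pos hqp
    simp [hCdef]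
    linarith
  refine ⟨C, hCpos, ?_⟩
  intro n hn
  have hnr1 : 1 ≤ (n:ℝ) := Nat.one_le_cast.2 hn
  have hnrpos : 0 < (n:ℝ) := by linarith
  have hnp : 0 < (n:ℝ)^(p-1) := Real.rpow_pos_of_pos hnrpos _
  set S : Set Ω := {ω | (n:ℝ) * x < |pSum X n ω|} with hSdef
  by_cases hcase : n < N₀
  · have h2 : μ S ≤ 1 := prob_le_one
    have h1 : (μ S).toReal ≤ 1 := by
      calc (μ S).toReal ≤ (1:ENNReal).toReal := ENNReal.toReal_mono (by norm_num) h2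
        _ = 1 := by norm_num
    have h2 : (n:ℝ)^(p-1) ≤ (N₀:ℝ)^(p-1) :=
      Real.rpow_le_rpow hnrpos.le (Nat.cast_le.2 (by omega)) (by linarith)
    have h3 : (n:ℝ)^(p-1) ≤ C := by
      have h4 : 0 < Real.exp C₂ := Real.exp_pos _
      have h5 : 0 < CV' * q^p := mul_pos hCV'pos hqp
      simp only [hCdef]
      linarith
    rw [le_div_iff₀ hnp]
    calc (μ S).toReal * (n:ℝ)^(p-1) ≤ 1 * (n:ℝ)^(p-1) :=
          mul_le_mul_of_nonneg_right h1 hnp.le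
      _ = (n:ℝ)^(p-1) := one_mul _
      _ ≤ C := h3
  · push_neg at hcase
    set nr : ℝ := (n:ℝ) with hnrdef
    set y : ℝ := nr * x / (8*p) with hydef
    have hy : 0 < y := by positivity
    have hNle : (8*p/x) * R ≤ nr := by
      have h1 := Nat.le_ceil ((8*p/x) * R)
      have h2 : ((⌈(8*p/x) * R⌉₊ : ℝ)) ≤ (N₀:ℝ) := by
        rw [hN₀def]; push_cast; linarith
      have h3 : (N₀:ℝ) ≤ nr := Nat.cast_le.2 hcase
      linarith
    have hyR : R ≤ y := by
      have h1 : R = ((8*p/x) * R) * (x/(8*p)) := by field_simp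
      calc R = ((8*p/x) * R) * (x/(8*p)) := h1
        _ ≤ nr * (x/(8*p)) := mul_le_mul_of_nonneg_right hNle (by positivity)
        _ = y := by rw [hydef]; ring
    have hy1 : 1 ≤ y := le_trans (le_max_left _ _) hyR
    have hyCV : 2*CV'/x ≤ y := le_trans (le_max_right _ _) hyR
    have hyp1 : y ≤ y^(p-1) := by
      calc y = y^(1:ℝ) := (Real.rpow_one y).symm
        _ ≤ y^(p-1) := Real.rpow_le_rpow_of_exponent_le hy1 (by linarith)
    have hypos : 0 < y^(p-1) := Real.rpow_pos_of_pos hy _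
    have hyppos : 0 < y^p := Real.rpow_pos_of_pos hy _
    have hYmeas : ∀ i, Measurable (fun ω => clampR y (X i ω)) :=
      fun i => (clampR_meas y).comp (hmeas i)
    have hYb : ∀ i ω, |clampR y (X i ω)| ≤ y := fun i ω => abs_clampR_le hy.le _
    have hYint : ∀ i, Integrable (fun ω => clampR y (X i ω)) μ :=
      fun i => integrable_of_bdd μ (hYmeas i) (hYb i)
    -- mean bias
    have hmb : ∀ i, 1 ≤ i →
        |∫ ω, clampR y (X i ω) ∂μ| * y^(p-1) ≤ ∫ ω, |X i ω|^p ∂μ := by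
      intro i hi
      have e1 : ∫ ω, clampR y (X i ω) ∂μ = ∫ ω, (clampR y (X i ω) - X i ω) ∂μ := by
        rw [integral_sub (hYint i) (hint i hi), hmean i hi, sub_zero]
      have e2 : |∫ ω, (clampR y (X i ω) - X i ω) ∂μ| ≤ ∫ ω, |clampR y (X i ω) - X i ω| ∂μ := by
        calc |∫ ω, (clampR y (X i ω) - X i ω) ∂μ| = ‖∫ ω, (clampR y (X i ω) - X i ω) ∂μ‖ :=
              (Real.norm_eq_abs _).symm
          _ ≤ ∫ ω, ‖clampR y (X i ω) - X i ω‖ ∂μ := norm_integral_le_integral_norm _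
          _ = ∫ ω, |clampR y (X i ω) - X i ω| ∂μ := by simp [Real.norm_eq_abs]
      have e3 : (∫ ω, |clampR y (X i ω) - X i ω| ∂μ) * y^(p-1) ≤ ∫ ω, |X i ω|^p ∂μ := by
        rw [← integral_mul_const]
        apply integral_mono (((hYint i).sub (hint i hi)).abs.mul_const _) (hV i hi)
        intro ω
        exact abs_clampR_sub_le hy (by linarith)
      calc |∫ ω, clampR y (X i ω) ∂μ| * y^(p-1)
          = |∫ ω, (clampR y (X i ω) - X i ω) ∂μ| * y^(p-1) := by rw [e1]
        _ ≤ (∫ ω, |clampR y (X i ω) - X i ω| ∂μ) * y^(p-1) :=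
            mul_le_mul_of_nonneg_right e2 hypos.le
        _ ≤ ∫ ω, |X i ω|^p ∂μ := e3
    have hMsum : |∑ i ∈ Icc 1 n, ∫ ω, clampR y (X i ω) ∂μ| ≤ nr * x / 2 := by
      have h1 : (∑ i ∈ Icc 1 n, |∫ ω, clampR y (X i ω) ∂μ|) * y^(p-1) ≤ CV' * nr := by
        rw [Finset.sum_mul]
        calc ∑ i ∈ Icc 1 n, |∫ ω, clampR y (X i ω) ∂μ| * y^(p-1)
            ≤ ∑ i ∈ Icc 1 n, ∫ ω, |X i ω|^p ∂μ :=
              Finset.sum_le_sum (fun i hi => hmb i (Finset.mem_Icc.1 hi).1)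
          _ ≤ CV' * nr := hCV' n
      have h2 : 2*CV'/x ≤ y^(p-1) := hyCV.trans hyp1
      have h3 : 0 ≤ ∑ i ∈ Icc 1 n, |∫ ω, clampR y (X i ω) ∂μ| :=
        Finset.sum_nonneg (fun i _ => abs_nonneg _)
      have h4 : ∑ i ∈ Icc 1 n, |∫ ω, clampR y (X i ω) ∂μ| ≤ nr * x / 2 := by
        have h5 : (∑ i ∈ Icc 1 n, |∫ ω, clampR y (X i ω) ∂μ|) * y^(p-1)
            ≤ (nr * x / 2) * y^(p-1) := by
          have h6 : CV' * nr ≤ (nr * x / 2) * (2*CV'/x) := by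
            have he : (nr * x / 2) * (2*CV'/x) = CV' * nr := by field_simp
            rw [he]
          calc (∑ i ∈ Icc 1 n, |∫ ω, clampR y (X i ω) ∂μ|) * y^(p-1) ≤ CV' * nr := h1
            _ ≤ (nr * x / 2) * (2*CV'/x) := h6
            _ ≤ (nr * x / 2) * y^(p-1) :=
                mul_le_mul_of_nonneg_left h2 (by positivity)
        exact le_of_mul_le_mul_right h5 hypos
      calc |∑ i ∈ Icc 1 n, ∫ ω, clampR y (X i ω) ∂μ|
          ≤ ∑ i ∈ Icc 1 n, |∫ ω, clampR y (X i ω) ∂μ| := Finset.abs_sum_le_sum_abs _ _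
        _ ≤ nr * x / 2 := h4
    -- variance bound
    have hvar : ∑ i ∈ Icc 1 n,
        ∫ ω, (clampR y (X i ω) - ∫ ω', clampR y (X i ω') ∂μ)^2 ∂μ ≤ D * nr := by
      have per : ∀ i ∈ Icc 1 n,
          ∫ ω, (clampR y (X i ω) - ∫ ω', clampR y (X i ω') ∂μ)^2 ∂μ ≤ ∫ ω, X i ω^2 ∂μ := by
        intro i hi
        set mi : ℝ := ∫ ω', clampR y (X i ω') ∂μ with hmi
        have hY2int : Integrable (fun ω => (clampR y (X i ω))^2) μ := by
          apply integrable_of_bdd μ ((hYmeas i).pow_const 2) (M := y^2)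
          intro ω
          rw [abs_of_nonneg (sq_nonneg _)]
          calc (clampR y (X i ω))^2 = |clampR y (X i ω)|^2 := (sq_abs _).symm
            _ ≤ y^2 := pow_le_pow_left₀ (abs_nonneg _) (hYb i ω) 2
        have hexpand : ∀ ω : Ω, (clampR y (X i ω) - mi)^2
            = (clampR y (X i ω))^2 - (2*mi) * clampR y (X i ω) + mi^2 := fun ω => by ring
        have hintegral : ∫ ω, (clampR y (X i ω) - mi)^2 ∂μ
            = (∫ ω, (clampR y (X i ω))^2 ∂μ) - mi^2 := by
          rw [integral_congr_ae (ae_of_all _ hexpand)]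
          have i1 : Integrable (fun ω => (clampR y (X i ω))^2 - (2*mi)*clampR y (X i ω)) μ :=
            hY2int.sub ((hYint i).const_mul (2*mi))
          rw [integral_add i1 (integrable_const _), integral_sub hY2int ((hYint i).const_mul _),
            integral_const_mul, integral_const]
          simp only [measure_univ, ENNReal.toReal_one, probReal_univ, smul_eq_mul, one_mul]
          rw [← hmi]
          ring
        have hpt : ∀ ω, (clampR y (X i ω))^2 ≤ X i ω^2 := by
          intro ω
          calc (clampR y (X i ω))^2 = |clampR y (X i ω)|^2 := (sq_abs _).symm
            _ ≤ |X i ω|^2 := pow_le_pow_left₀ (abs_nonneg _) (abs_clampR_le_abs hy.le (X i ω)) 2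
            _ = X i ω^2 := sq_abs _
        have h2 : ∫ ω, (clampR y (X i ω))^2 ∂μ ≤ ∫ ω, X i ω^2 ∂μ :=
          integral_mono hY2int (hB i (Finset.mem_Icc.1 hi).1) hpt
        calc ∫ ω, (clampR y (X i ω) - mi)^2 ∂μ
            = (∫ ω, (clampR y (X i ω))^2 ∂μ) - mi^2 := hintegral
          _ ≤ ∫ ω, (clampR y (X i ω))^2 ∂μ := by linarith [sq_nonneg mi]
          _ ≤ ∫ ω, X i ω^2 ∂μ := h2
      calc ∑ i ∈ Icc 1 n, ∫ ω, (clampR y (X i ω) - ∫ ω', clampR y (X i ω') ∂μ)^2 ∂μ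
          ≤ ∑ i ∈ Icc 1 n, ∫ ω, X i ω^2 ∂μ := Finset.sum_le_sum per
        _ ≤ D * nr := hCB' n
    set t : ℝ := nr * x / 2 with htdef
    set lam : ℝ := Real.log nr / (4*y) with hlamdef
    have hlam : 0 ≤ lam := div_nonneg (Real.log_nonneg hnr1) (by positivity)
    have htail1 := tail_bound (t := t) hNA hmeas hy hlam n (Or.inl rfl) hvar
    have htail2 := tail_bound (t := t) hNA hmeas hy hlam n (Or.inr rfl) hvar
    set L : ℝ := Real.log nr with hLdef
    have hL0 : 0 ≤ L := Real.log_nonneg hnr1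
    have hxne : x ≠ 0 := ne_of_gt hx
    have hpne : p ≠ 0 := ne_of_gt hppos
    have hnrne : nr ≠ 0 := ne_of_gt hnrpos
    have hyne : y ≠ 0 := ne_of_gt hy
    have hA : lam * t = p * L := by
      rw [hlamdef, htdef, hydef]
      field_simp
      ring
    have hl2y : lam * (2*y) = L / 2 := by
      rw [hlamdef]
      field_simp
      ring
    have hkey : Real.exp (L/2) * L^2 ≤ 16 * nr := by
      have h1 : nr = Real.exp L := (Real.exp_log hnrpos).symm
      have h2 : Real.exp L = Real.exp (L/2) * Real.exp (L/2) := by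
        rw [← Real.exp_add]; congr 1; ring
      have h3 : Real.exp (L/2) = Real.exp (L/4) * Real.exp (L/4) := by
        rw [← Real.exp_add]; congr 1; ring
      have h4 := Real.add_one_le_exp (L/4)
      have e4 : L^2 ≤ 16 * Real.exp (L/2) := by
        have h5 : (L/4+1)^2 ≤ Real.exp (L/4) * Real.exp (L/4) := by
          rw [pow_two]
          exact mul_self_le_mul_self (by linarith) h4
        rw [h3]
        calc L^2 ≤ L^2 + 8*L + 16 := by linarith
          _ = 16*((L/4+1)^2) := by ring
          _ ≤ 16*(Real.exp (L/4) * Real.exp (L/4)) :=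
              mul_le_mul_of_nonneg_left h5 (by norm_num)
      calc Real.exp (L/2) * L^2 ≤ Real.exp (L/2) * (16 * Real.exp (L/2)) :=
            mul_le_mul_of_nonneg_left e4 (Real.exp_pos _).le
        _ = 16 * (Real.exp (L/2) * Real.exp (L/2)) := by ring
        _ = 16 * nr := by rw [← h2, ← h1]
    have hB2 : Real.exp (lam*(2*y))/2 * lam^2 * (D*nr) ≤ C₂ := by
      rw [hl2y]
      have e1 : Real.exp (L/2)/2 * lam^2 * (D*nr) * (nr * x^2)
          = 2*D*p^2 * (Real.exp (L/2) * L^2) := by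
        rw [hlamdef, hydef]
        field_simp
        ring
      have e2 : C₂ * (nr * x^2) = 32*D*p^2*nr := by
        rw [hC₂def]
        field_simp
      have h5 : Real.exp (L/2)/2 * lam^2 * (D*nr) * (nr*x^2) ≤ C₂ * (nr*x^2) := by
        rw [e1, e2]
        calc 2*D*p^2 * (Real.exp (L/2) * L^2) ≤ 2*D*p^2 * (16*nr) :=
              mul_le_mul_of_nonneg_left hkey (by positivity)
          _ = 32*D*p^2*nr := by ring
      exact le_of_mul_le_mul_right h5 (by positivity)
    have htb : Real.exp (-(lam * t) + Real.exp (lam*(2*y))/2 * lam^2 * (D*nr))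
        ≤ Real.exp C₂ / nr^(p-1) := by
      calc Real.exp (-(lam * t) + Real.exp (lam*(2*y))/2 * lam^2 * (D*nr))
          ≤ Real.exp (-(p*L) + C₂) := Real.exp_le_exp.2 (by
            have h1 := hB2
            have h2 := hA
            linarith)
        _ = Real.exp C₂ * Real.exp (L * (-p)) := by rw [← Real.exp_add]; congr 1; ring
        _ = Real.exp C₂ * nr^(-p) := by rw [← Real.rpow_def_of_pos hnrpos]
        _ ≤ Real.exp C₂ * nr^(-(p-1)) := by
            apply mul_le_mul_of_nonneg_left _ (Real.exp_pos _).le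
            exact Real.rpow_le_rpow_of_exponent_le hnr1 (by linarith)
        _ = Real.exp C₂ / nr^(p-1) := by
            rw [Real.rpow_neg hnrpos.le, div_eq_mul_inv]
    -- per-variable Markov
    have hmark : ∀ i ∈ Icc 1 n,
        y^p * (μ {ω | y < |X i ω|}).toReal ≤ ∫ ω, |X i ω|^p ∂μ := by
      intro i hi
      have hi1 : 1 ≤ i := (Finset.mem_Icc.1 hi).1
      have hsub : {ω | y < |X i ω|} ⊆ {ω | y^p ≤ |X i ω|^p} := by
        intro ω hω
        exact Real.rpow_le_rpow hy.le (le_of_lt hω) hppos.le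
      have h1 := mul_meas_ge_le_integral_of_nonneg (μ := μ)
        (f := fun ω => |X i ω|^p) (ae_of_all _ (fun ω => Real.rpow_nonneg (abs_nonneg _) p))
        (hV i hi1) (y^p)
      have h2 : (μ {ω | y < |X i ω|}).toReal ≤ (μ {ω | y^p ≤ |X i ω|^p}).toReal :=
        ENNReal.toReal_mono (measure_ne_top μ _) (measure_mono hsub)
      calc y^p * (μ {ω | y < |X i ω|}).toReal
          ≤ y^p * (μ {ω | y^p ≤ |X i ω|^p}).toReal := mul_le_mul_of_nonneg_left h2 hyppos.le
        _ ≤ ∫ ω, |X i ω|^p ∂μ := h1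
    have hUsum : ∑ i ∈ Icc 1 n, (μ {ω | y < |X i ω|}).toReal ≤ CV' * q^p / nr^(p-1) := by
      have h1 : y^p * ∑ i ∈ Icc 1 n, (μ {ω | y < |X i ω|}).toReal ≤ CV' * nr := by
        rw [Finset.mul_sum]
        calc ∑ i ∈ Icc 1 n, y^p * (μ {ω | y < |X i ω|}).toReal
            ≤ ∑ i ∈ Icc 1 n, ∫ ω, |X i ω|^p ∂μ := Finset.sum_le_sum hmark
          _ ≤ CV' * nr := hCV' n
      have hyq : y = nr / q := by rw [hydef, hqdef]; field_simp
      have F2 : y^p * q^p = nr^p := by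
        rw [hyq, Real.div_rpow hnrpos.le hq.le]
        field_simp
      have F3 : nr^(p-1) * nr = nr^p := by
        calc nr^(p-1) * nr = nr^(p-1) * nr^(1:ℝ) := by rw [Real.rpow_one]
          _ = nr^(p-1+1) := (Real.rpow_add hnrpos _ _).symm
          _ = nr^p := by congr 1; ring
      rw [le_div_iff₀ hnp]
      have h5 : y^p * ((∑ i ∈ Icc 1 n, (μ {ω | y < |X i ω|}).toReal) * nr^(p-1))
          ≤ y^p * (CV' * q^p) := by
        have h6 := mul_le_mul_of_nonneg_right h1 hnp.le
        have h7 : CV' * nr * nr^(p-1) = y^p * (CV' * q^p) := by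
          calc CV' * nr * nr^(p-1) = CV' * (nr^(p-1) * nr) := by ring
            _ = CV' * nr^p := by rw [F3]
            _ = CV' * (y^p * q^p) := by rw [F2]
            _ = y^p * (CV' * q^p) := by ring
        calc y^p * ((∑ i ∈ Icc 1 n, (μ {ω | y < |X i ω|}).toReal) * nr^(p-1))
            = y^p * (∑ i ∈ Icc 1 n, (μ {ω | y < |X i ω|}).toReal) * nr^(p-1) := by ring
          _ ≤ CV' * nr * nr^(p-1) := h6
          _ = y^p * (CV' * q^p) := h7
      exact le_of_mul_le_mul_left h5 hyppos
    have hU : (μ (⋃ i ∈ (Icc 1 n : Finset ℕ), {ω | y < |X i ω|})).toReal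
        ≤ CV' * q^p / nr^(p-1) := by
      have h1 : μ (⋃ i ∈ (Icc 1 n : Finset ℕ), {ω | y < |X i ω|})
          ≤ ∑ i ∈ Icc 1 n, μ {ω | y < |X i ω|} := measure_biUnion_finset_le _ _
      have h2 : (∑ i ∈ Icc 1 n, μ {ω | y < |X i ω|}) ≠ ⊤ :=
        (ENNReal.sum_lt_top.2 (fun i _ => measure_lt_top μ _)).ne
      calc (μ (⋃ i ∈ (Icc 1 n : Finset ℕ), {ω | y < |X i ω|})).toReal
          ≤ (∑ i ∈ Icc 1 n, μ {ω | y < |X i ω|}).toReal := ENNReal.toReal_mono h2 h1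
        _ = ∑ i ∈ Icc 1 n, (μ {ω | y < |X i ω|}).toReal :=
            ENNReal.toReal_sum (fun i _ => measure_ne_top μ _)
        _ ≤ CV' * q^p / nr^(p-1) := hUsum
    -- inclusion
    have hincl : S ⊆ (⋃ i ∈ (Icc 1 n : Finset ℕ), {ω | y < |X i ω|})
        ∪ ({ω | t < 1 * ∑ i ∈ Icc 1 n, (clampR y (X i ω) - ∫ ω', clampR y (X i ω') ∂μ)}
          ∪ {ω | t < -1 * ∑ i ∈ Icc 1 n, (clampR y (X i ω) - ∫ ω', clampR y (X i ω') ∂μ)}) := by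
      intro ω hω
      simp only [hSdef, Set.mem_setOf_eq] at hω
      by_cases hall : ∀ i ∈ Icc 1 n, |X i ω| ≤ y
      · right
        have hsum : ∑ i ∈ Icc 1 n, (clampR y (X i ω) - ∫ ω', clampR y (X i ω') ∂μ)
            = pSum X n ω - ∑ i ∈ Icc 1 n, ∫ ω', clampR y (X i ω') ∂μ := by
          rw [Finset.sum_sub_distrib]
          congr 1
          exact Finset.sum_congr rfl (fun i hi => clampR_eq_self (hall i hi))
        have habs2 : t < |∑ i ∈ Icc 1 n, (clampR y (X i ω) - ∫ ω', clampR y (X i ω') ∂μ)| := by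
          rw [hsum]
          have h1 : |pSum X n ω| - |∑ i ∈ Icc 1 n, ∫ ω', clampR y (X i ω') ∂μ|
              ≤ |pSum X n ω - ∑ i ∈ Icc 1 n, ∫ ω', clampR y (X i ω') ∂μ| :=
            abs_sub_abs_le_abs_sub _ _
          rw [htdef]
          linarith [hMsum]
        rcases lt_abs.1 habs2 with h | h
        · left
          show t < 1 * _
          rw [one_mul]
          exact h
        · right
          show t < -1 * _
          rw [neg_one_mul]
          exact h
      · left
        push_neg at hall
        obtain ⟨i, hi, hyi⟩ := hall
        exact Set.mem_biUnion hi hyi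
    -- final assembly
    set U : Set Ω := ⋃ i ∈ (Icc 1 n : Finset ℕ), {ω | y < |X i ω|} with hUdef
    set A1 : Set Ω :=
      {ω | t < 1 * ∑ i ∈ Icc 1 n, (clampR y (X i ω) - ∫ ω', clampR y (X i ω') ∂μ)} with hA1def
    set B1 : Set Ω :=
      {ω | t < -1 * ∑ i ∈ Icc 1 n, (clampR y (X i ω) - ∫ ω', clampR y (X i ω') ∂μ)} with hB1def
    have hmeasle : μ S ≤ μ U + (μ A1 + μ B1) := by
      calc μ S ≤ μ (U ∪ (A1 ∪ B1)) := measure_mono hincl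
        _ ≤ μ U + μ (A1 ∪ B1) := measure_union_le _ _
        _ ≤ μ U + (μ A1 + μ B1) := add_le_add_right (measure_union_le _ _) _
    have hfin1 : (μ S).toReal ≤ (μ U).toReal + ((μ A1).toReal + (μ B1).toReal) := by
      have hne : μ U + (μ A1 + μ B1) ≠ ⊤ :=
        ENNReal.add_ne_top.2 ⟨measure_ne_top μ _,
          ENNReal.add_ne_top.2 ⟨measure_ne_top μ _, measure_ne_top μ _⟩⟩
      calc (μ S).toReal ≤ (μ U + (μ A1 + μ B1)).toReal := ENNReal.toReal_mono hne hmeasle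
        _ ≤ (μ U).toReal + (μ A1 + μ B1).toReal := ENNReal.toReal_add_le
        _ ≤ (μ U).toReal + ((μ A1).toReal + (μ B1).toReal) :=
            add_le_add_right ENNReal.toReal_add_le _
    have hA1b : (μ A1).toReal ≤ Real.exp C₂ / nr^(p-1) := htail1.trans htb
    have hB1b : (μ B1).toReal ≤ Real.exp C₂ / nr^(p-1) := htail2.trans htb
    have hsumup : (μ S).toReal
        ≤ CV' * q^p / nr^(p-1) + (Real.exp C₂ / nr^(p-1) + Real.exp C₂ / nr^(p-1)) := by
      calc (μ S).toReal ≤ (μ U).toReal + ((μ A1).toReal + (μ B1).toReal) := hfin1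
        _ ≤ CV' * q^p / nr^(p-1) + (Real.exp C₂ / nr^(p-1) + Real.exp C₂ / nr^(p-1)) := by
            apply add_le_add hU
            exact add_le_add hA1b hB1b
    have heq : CV' * q^p / nr^(p-1) + (Real.exp C₂ / nr^(p-1) + Real.exp C₂ / nr^(p-1))
        = (CV' * q^p + 2*Real.exp C₂) / nr^(p-1) := by ring
    have hCge : CV' * q^p + 2*Real.exp C₂ ≤ C := by
      have h1 : 0 ≤ ((N₀:ℝ))^(p-1) := Real.rpow_nonneg (Nat.cast_nonneg _) _
      rw [hCdef]
      linarith
    calc (μ S).toReal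
        ≤ CV' * q^p / nr^(p-1) + (Real.exp C₂ / nr^(p-1) + Real.exp C₂ / nr^(p-1)) := hsumup
      _ = (CV' * q^p + 2*Real.exp C₂) / nr^(p-1) := heq
      _ ≤ C / nr^(p-1) := by gcongr
end

section
/- Let p > 1 and let {X_i, i ≥ 1} be a sequence of non-degenerate NA random variables with E[X_i] = 0 for all i. Assume there is a constant a > 0 with K := Σ_{i=1}^n E[exp{a|X_i|^p}] < ∞. Let q = p/(p−1) and let τ > 0 satisfy (qτ)^{1/q}(pa)^{1/p} = 1. Then for any τ_1 > τ there exist positive numbers t_1 and A, depending only on a, K and p, such that E[e^{t S_n}] ≤ exp{n τ_1 t^q} for all t ≥ t_1, and E[e^{t S_n}] ≤ exp{n A t²} for all 0 ≤ t ≤ t_1. -/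
open MeasureTheory Finset

lemma expA (y : ℝ) : Real.exp y ≤ 1 + y + y ^ 2 * Real.exp |y| := by
  rcases le_or_gt |y| 1 with h | h
  · have hb := Real.exp_bound h (n := 2) (by norm_num)
    have : Real.exp y - (1 + y) ≤ |y| ^ 2 * (3 / (2 * 2)) := by
      have hs : ∑ m ∈ Finset.range 2, y ^ m / m.factorial = 1 + y := by
        simp [Finset.sum_range_succ]
      calc Real.exp y - (1 + y) ≤ |Real.exp y - (1 + y)| := le_abs_self _
        _ ≤ |y| ^ 2 * (3 / (2 * 2)) := by
            rw [← hs]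
            simpa [Nat.factorial] using hb
    have h2 : |y| ^ 2 * (3 / (2 * 2)) ≤ y ^ 2 * Real.exp |y| := by
      rw [sq_abs]
      have := Real.one_le_exp (abs_nonneg y)
      nlinarith [sq_nonneg y]
    linarith
  · rcases le_or_gt 0 y with hy | hy
    · have h1 : Real.exp y ≤ y ^ 2 * Real.exp |y| := by
        rw [abs_of_nonneg hy]
        have h1y : 1 < y := by rwa [abs_of_nonneg hy] at h
        exact le_mul_of_one_le_left (Real.exp_pos y).le (by nlinarith)
      nlinarith
    · have h0 : Real.exp y ≤ 1 := Real.exp_le_one_iff.mpr hy.le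
      have habs : |y| = -y := abs_of_neg hy
      have h1 : 1 < -y := by rw [← habs]; exact h
      have h2 : (1:ℝ) ≤ Real.exp |y| := Real.one_le_exp (abs_nonneg y)
      nlinarith

lemma youngB {p q a τ : ℝ} (hp : 1 < p) (ha : 0 < a) (hτ : 0 < τ)
    (hq : q = p / (p - 1)) (hτeq : (q * τ) ^ (1 / q) * (p * a) ^ (1 / p) = 1)
    {t : ℝ} (ht : 0 ≤ t) (x : ℝ) : t * x ≤ a * |x| ^ p + τ * t ^ q := by
  have hpq : p.HolderConjugate q := (Real.holderConjugate_iff_eq_conjExponent hp).mpr hq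
  have hq1 : 1 < q := hpq.symm.lt
  have hp0 : p ≠ 0 := by positivity
  have hq0 : q ≠ 0 := by positivity
  have hpa : (0:ℝ) < p * a := mul_pos (by linarith) ha
  have hqτ : (0:ℝ) < q * τ := mul_pos (by linarith) hτ
  have key := Real.young_inequality_of_nonneg (a := (p*a)^(1/p) * |x|) (b := (q*τ)^(1/q) * t)
    (mul_nonneg (Real.rpow_nonneg hpa.le _) (abs_nonneg x))
    (mul_nonneg (Real.rpow_nonneg hqτ.le _) ht) hpq
  have e1 : ((p * a) ^ (1 / p) * |x|) ^ p = p * a * |x| ^ p := by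
    rw [Real.mul_rpow (Real.rpow_nonneg hpa.le _) (abs_nonneg x),
      ← Real.rpow_mul hpa.le, one_div_mul_cancel hp0, Real.rpow_one]
  have e2 : ((q * τ) ^ (1 / q) * t) ^ q = q * τ * t ^ q := by
    rw [Real.mul_rpow (Real.rpow_nonneg hqτ.le _) ht,
      ← Real.rpow_mul hqτ.le, one_div_mul_cancel hq0, Real.rpow_one]
  have e3 : (p * a) ^ (1 / p) * |x| * ((q * τ) ^ (1 / q) * t) = t * |x| := by
    linear_combination (|x| * t) * hτeq
  rw [e3, e1, e2] at key
  have h4 : p * a * |x| ^ p / p = a * |x| ^ p := by field_simp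
  have h5 : q * τ * t ^ q / q = τ * t ^ q := by field_simp
  rw [h4, h5] at key
  calc t * x ≤ t * |x| := by
        have := le_abs_self x
        nlinarith
    _ ≤ a * |x| ^ p + τ * t ^ q := key

lemma sqExpBound {p a t₁ : ℝ} (hp : 1 < p) (ha : 0 < a) (ht₁ : 0 < t₁) :
    ∃ C : ℝ, 1 ≤ C ∧ ∀ t x : ℝ, 0 ≤ t → t ≤ t₁ →
      x ^ 2 * Real.exp (t * |x|) ≤ C * Real.exp (a * |x| ^ p) := by
  set R : ℝ := ((2 + t₁) / a) ^ (1 / (p - 1)) with hR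
  have hRpos : 0 < R := Real.rpow_pos_of_pos (by positivity) _
  refine ⟨max (R ^ 2 * Real.exp (t₁ * R)) 1, le_max_right _ _, fun t x ht htt => ?_⟩
  set s : ℝ := |x| with hs
  have hs0 : 0 ≤ s := abs_nonneg x
  have hx2 : x ^ 2 = s ^ 2 := (sq_abs x).symm
  have hexp1 : (1:ℝ) ≤ Real.exp (a * s ^ p) := Real.one_le_exp (by positivity)
  rcases le_or_gt s R with hsR | hsR
  · have step1 : x ^ 2 * Real.exp (t * s) ≤ R ^ 2 * Real.exp (t₁ * R) := by
      rw [hx2]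
      have h1 : s ^ 2 ≤ R ^ 2 := by nlinarith
      have h2 : Real.exp (t * s) ≤ Real.exp (t₁ * R) := by
        apply Real.exp_le_exp.mpr
        nlinarith
      nlinarith [Real.exp_pos (t * s), Real.exp_pos (t₁ * R)]
    have step2 : R ^ 2 * Real.exp (t₁ * R) ≤
        max (R ^ 2 * Real.exp (t₁ * R)) 1 * Real.exp (a * s ^ p) := by
      nlinarith [le_max_left (R ^ 2 * Real.exp (t₁ * R)) 1,
        le_max_right (R ^ 2 * Real.exp (t₁ * R)) (1:ℝ)]
    exact le_trans step1 step2
  · have hspos : 0 < s := lt_trans hRpos hsR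
    have hkey : (2 + t₁) * s ≤ a * s ^ p := by
      have hRp : R ^ (p - 1) = (2 + t₁) / a := by
        rw [hR, ← Real.rpow_mul (by positivity), one_div_mul_cancel (by linarith : p - 1 ≠ 0),
          Real.rpow_one]
      have hmono : R ^ (p - 1) ≤ s ^ (p - 1) :=
        Real.rpow_le_rpow hRpos.le hsR.le (by linarith)
      have hsp : s ^ (p - 1) * s = s ^ p := by
        rw [Real.rpow_sub hspos, Real.rpow_one]
        field_simp
      have h2 : (2 + t₁) / a ≤ s ^ (p - 1) := hRp ▸ hmono
      have h3 : (2 + t₁) / a * s ≤ s ^ (p - 1) * s := by nlinarith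
      rw [hsp] at h3
      calc (2 + t₁) * s = a * ((2 + t₁) / a * s) := by field_simp
        _ ≤ a * s ^ p := by nlinarith
    have hx2e : x ^ 2 ≤ Real.exp (2 * s) := by
      rw [hx2]
      have h1 : s ≤ Real.exp s := by linarith [Real.add_one_le_exp s]
      have h2 : s ^ 2 ≤ Real.exp s * Real.exp s := by nlinarith
      rw [two_mul, Real.exp_add]
      exact h2
    have step1 : x ^ 2 * Real.exp (t * s) ≤ Real.exp (2 * s) * Real.exp (t₁ * s) := by
      have h4 : Real.exp (t * s) ≤ Real.exp (t₁ * s) := by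
        apply Real.exp_le_exp.mpr; nlinarith
      nlinarith [Real.exp_pos (t * s), Real.exp_pos (2 * s), sq_nonneg x]
    have step2 : Real.exp (2 * s) * Real.exp (t₁ * s) = Real.exp ((2 + t₁) * s) := by
      rw [← Real.exp_add]; ring_nf
    have step3 : Real.exp ((2 + t₁) * s) ≤ Real.exp (a * s ^ p) := Real.exp_le_exp.mpr hkey
    have step4 : Real.exp (a * s ^ p) ≤
        max (R ^ 2 * Real.exp (t₁ * R)) 1 * Real.exp (a * s ^ p) :=
      le_mul_of_one_le_left (Real.exp_pos _).le (le_max_right _ _)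
    linarith [step2 ▸ step1]

lemma na_mgf {Ω : Type*} [MeasurableSpace Ω] (μ : Measure Ω) [IsProbabilityMeasure μ]
    (X : ℕ → Ω → ℝ) (hmeas : ∀ i, Measurable (X i)) (hNA : NegAssoc μ X)
    {t : ℝ} (ht : 0 ≤ t) (n : ℕ)
    (hgint : ∀ i ∈ Finset.Icc 1 n, Integrable (fun ω => Real.exp (t * X i ω)) μ) :
    ∀ k, k ≤ n → Integrable (fun ω => Real.exp (t * pSum X k ω)) μ ∧
      ∫ ω, Real.exp (t * pSum X k ω) ∂μ ≤
        ∏ i ∈ Finset.Icc 1 k, ∫ ω, Real.exp (t * X i ω) ∂μ := by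
  -- measurability of pSum
  have hpSmeas : ∀ k, Measurable (pSum X k) := by
    intro k
    unfold pSum
    exact Finset.measurable_sum _ (fun i _ => hmeas i)
  intro k
  induction k with
  | zero =>
    intro _
    constructor
    · simpa [pSum] using (integrable_const (1:ℝ))
    · simp [pSum]
  | succ k ih =>
    intro hkn
    obtain ⟨ihInt, ihLe⟩ := ih (le_trans (Nat.le_succ k) hkn)
    have hk1n : k + 1 ∈ Finset.Icc 1 n := by
      simp [Nat.succ_le_iff]
      omega
    have hgk : Integrable (fun ω => Real.exp (t * X (k+1) ω)) μ := hgint _ hk1n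
    -- pSum (k+1) = pSum k + X (k+1)
    have hsplit : ∀ ω, pSum X (k+1) ω = pSum X k ω + X (k+1) ω := by
      intro ω
      unfold pSum
      rw [show Finset.Icc 1 (k+1) = insert (k+1) (Finset.Icc 1 k) by
        ext j; simp [Finset.mem_Icc, Finset.mem_insert]; omega]
      rw [Finset.sum_insert (by simp)]
      ring
    have hexp_split : ∀ ω, Real.exp (t * pSum X (k+1) ω) =
        Real.exp (t * pSum X k ω) * Real.exp (t * X (k+1) ω) := by
      intro ω
      rw [hsplit ω, ← Real.exp_add]
      ring_nf
    -- apply NA with truncation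
    set A₁ : Finset ℕ := Finset.Icc 1 k with hA₁
    set A₂ : Finset ℕ := {k+1} with hA₂
    have hmem2 : k + 1 ∈ A₂ := by simp [hA₂]
    have key : ∀ m : ℕ,
        ∫ ω, (min (Real.exp (t * pSum X k ω)) m) * (min (Real.exp (t * X (k+1) ω)) m) ∂μ ≤
          (∫ ω, Real.exp (t * pSum X k ω) ∂μ) * ∫ ω, Real.exp (t * X (k+1) ω) ∂μ := by
      intro m
      set f₁ : (↥A₁ → ℝ) → ℝ := fun y => min (Real.exp (t * ∑ i, y i)) m with hf₁
      set f₂ : (↥A₂ → ℝ) → ℝ := fun y => min (Real.exp (t * y ⟨k+1, hmem2⟩)) m with hf₂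
      have hmono1 : Monotone f₁ := by
        intro y y' hy
        exact min_le_min (Real.exp_le_exp.mpr (by
          exact mul_le_mul_of_nonneg_left (Finset.sum_le_sum fun i _ => hy i) ht)) le_rfl
      have hmono2 : Monotone f₂ := by
        intro y y' hy
        exact min_le_min (Real.exp_le_exp.mpr
          (mul_le_mul_of_nonneg_left (hy _) ht)) le_rfl
      have hrw1 : ∀ ω, (f₁ fun i => X i.1 ω) = min (Real.exp (t * pSum X k ω)) m := by
        intro ω
        simp only [hf₁]
        unfold pSum
        congr 2
        rw [Finset.sum_coe_sort A₁ (fun i => X i ω), hA₁]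
      have hrw2 : ∀ ω, (f₂ fun j => X j.1 ω) = min (Real.exp (t * X (k+1) ω)) m := by
        intro ω; rfl
      -- integrability of the truncated functions
      have hb1 : Measurable fun ω => min (Real.exp (t * pSum X k ω)) (m:ℝ) :=
        ((measurable_const.mul (hpSmeas k)).exp).min measurable_const
      have hb2 : Measurable fun ω => min (Real.exp (t * X (k+1) ω)) (m:ℝ) :=
        ((measurable_const.mul (hmeas (k+1))).exp).min measurable_const
      have hnn1 : ∀ ω, 0 ≤ min (Real.exp (t * pSum X k ω)) (m:ℝ) := fun ω =>
        le_min (Real.exp_pos _).le (by positivity)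
      have hnn2 : ∀ ω, 0 ≤ min (Real.exp (t * X (k+1) ω)) (m:ℝ) := fun ω =>
        le_min (Real.exp_pos _).le (by positivity)
      have hint1 : Integrable (fun ω => min (Real.exp (t * pSum X k ω)) (m:ℝ)) μ := by
        refine (integrable_const (m:ℝ)).mono' hb1.aestronglyMeasurable
          (Filter.Eventually.of_forall fun ω => ?_)
        rw [Real.norm_eq_abs, abs_of_nonneg (hnn1 ω)]
        exact min_le_right _ _
      have hint2 : Integrable (fun ω => min (Real.exp (t * X (k+1) ω)) (m:ℝ)) μ := by
        refine (integrable_const (m:ℝ)).mono' hb2.aestronglyMeasurable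
          (Filter.Eventually.of_forall fun ω => ?_)
        rw [Real.norm_eq_abs, abs_of_nonneg (hnn2 ω)]
        exact min_le_right _ _
      have hint12 : Integrable (fun ω =>
          min (Real.exp (t * pSum X k ω)) (m:ℝ) * min (Real.exp (t * X (k+1) ω)) (m:ℝ)) μ := by
        refine (integrable_const ((m:ℝ) * m)).mono' (hb1.mul hb2).aestronglyMeasurable
          (Filter.Eventually.of_forall fun ω => ?_)
        rw [Real.norm_eq_abs, abs_of_nonneg (mul_nonneg (hnn1 ω) (hnn2 ω))]
        exact mul_le_mul (min_le_right _ _) (min_le_right _ _) (hnn2 ω) (by positivity)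
      have hNAap := hNA A₁ A₂ (fun i hi => by simp [hA₁] at hi; omega)
        (fun j hj => by simp [hA₂] at hj; omega)
        (by simp [hA₁, hA₂, Finset.disjoint_singleton_right])
        f₁ f₂ hmono1 hmono2
        (by simpa only [hrw1] using hint1)
        (by simpa only [hrw2] using hint2)
        (by simpa only [hrw1, hrw2] using hint12)
      simp only [hrw1, hrw2] at hNAap
      refine le_trans hNAap (mul_le_mul ?_ ?_ ?_ ?_)
      · exact integral_mono hint1 ihInt (fun ω => min_le_left _ _)
      · exact integral_mono hint2 hgk (fun ω => min_le_left _ _)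
      · exact integral_nonneg (fun ω => hnn2 ω)
      · exact integral_nonneg (fun ω => (Real.exp_pos _).le)
    -- monotone convergence
    set C : ℝ := (∫ ω, Real.exp (t * pSum X k ω) ∂μ) * ∫ ω, Real.exp (t * X (k+1) ω) ∂μ
      with hC
    have hC0 : 0 ≤ C := mul_nonneg (integral_nonneg fun ω => (Real.exp_pos _).le)
      (integral_nonneg fun ω => (Real.exp_pos _).le)
    set G : ℕ → Ω → ENNReal := fun m ω => ENNReal.ofReal
      ((min (Real.exp (t * pSum X k ω)) m) * (min (Real.exp (t * X (k+1) ω)) m)) with hG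
    have hGmeas : ∀ m, Measurable (G m) := by
      intro m
      apply Measurable.ennreal_ofReal
      exact (((measurable_const.mul (hpSmeas k)).exp).min measurable_const).mul
        (((measurable_const.mul (hmeas (k+1))).exp).min measurable_const)
    have hGmono : Monotone G := by
      intro m m' hmm ω
      apply ENNReal.ofReal_le_ofReal
      have h1 : (0:ℝ) ≤ min (Real.exp (t * pSum X k ω)) m :=
        le_min (Real.exp_pos _).le (by positivity)
      have h2 : (0:ℝ) ≤ min (Real.exp (t * X (k+1) ω)) m :=
        le_min (Real.exp_pos _).le (by positivity)
      have hmm' : (m:ℝ) ≤ (m':ℝ) := Nat.cast_le.mpr hmm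
      exact mul_le_mul (min_le_min le_rfl hmm') (min_le_min le_rfl hmm') h2
        (le_trans h1 (min_le_min le_rfl hmm'))
    have hGsup : ∀ ω, (⨆ m, G m ω) = ENNReal.ofReal (Real.exp (t * pSum X (k+1) ω)) := by
      intro ω
      set u : ℝ := Real.exp (t * pSum X k ω) with hu
      set v : ℝ := Real.exp (t * X (k+1) ω) with hv
      have hu0 : 0 < u := Real.exp_pos _
      have hv0 : 0 < v := Real.exp_pos _
      have htarget : Real.exp (t * pSum X (k+1) ω) = u * v := hexp_split ω
      rw [htarget]
      apply le_antisymm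
      · refine iSup_le fun m => ENNReal.ofReal_le_ofReal ?_
        exact mul_le_mul (min_le_left _ _) (min_le_left _ _)
          (le_min hv0.le (by positivity)) hu0.le
      · have hm0 : ∃ m : ℕ, u ≤ m ∧ v ≤ m := by
          obtain ⟨m₁, hm₁⟩ := exists_nat_ge u
          obtain ⟨m₂, hm₂⟩ := exists_nat_ge v
          exact ⟨max m₁ m₂, le_trans hm₁ (Nat.cast_le.mpr (le_max_left _ _)),
            le_trans hm₂ (Nat.cast_le.mpr (le_max_right _ _))⟩
        obtain ⟨m, hmu, hmv⟩ := hm0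
        have : G m ω = ENNReal.ofReal (u * v) := by
          simp only [hG, ← hu, ← hv, min_eq_left hmu, min_eq_left hmv]
        exact this ▸ le_iSup (fun m => G m ω) m
    have hFmeas : Measurable fun ω => Real.exp (t * pSum X (k+1) ω) :=
      (measurable_const.mul (hpSmeas (k+1))).exp
    have hlin : ∫⁻ ω, ENNReal.ofReal (Real.exp (t * pSum X (k+1) ω)) ∂μ ≤
        ENNReal.ofReal C := by
      have h1 : ∫⁻ ω, ENNReal.ofReal (Real.exp (t * pSum X (k+1) ω)) ∂μ =
          ⨆ m, ∫⁻ ω, G m ω ∂μ := by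
        rw [← lintegral_iSup hGmeas hGmono]
        congr 1
        ext ω
        rw [hGsup ω]
      rw [h1]
      refine iSup_le fun m => ?_
      -- ∫⁻ G m = ofReal (∫ G m real) ≤ ofReal C
      have hint12 : Integrable (fun ω =>
          min (Real.exp (t * pSum X k ω)) (m:ℝ) * min (Real.exp (t * X (k+1) ω)) (m:ℝ)) μ := by
        refine (integrable_const ((m:ℝ) * m)).mono'
          ((((measurable_const.mul (hpSmeas k)).exp).min measurable_const).mul
            (((measurable_const.mul (hmeas (k+1))).exp).min measurable_const)).aestronglyMeasurable
          (Filter.Eventually.of_forall fun ω => ?_)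
        have h1 : (0:ℝ) ≤ min (Real.exp (t * pSum X k ω)) m :=
          le_min (Real.exp_pos _).le (by positivity)
        have h2 : (0:ℝ) ≤ min (Real.exp (t * X (k+1) ω)) m :=
          le_min (Real.exp_pos _).le (by positivity)
        rw [Real.norm_eq_abs, abs_of_nonneg (mul_nonneg h1 h2)]
        exact mul_le_mul (min_le_right _ _) (min_le_right _ _) h2 (by positivity)
      have h2 : ∫⁻ ω, G m ω ∂μ = ENNReal.ofReal (∫ ω,
          min (Real.exp (t * pSum X k ω)) (m:ℝ) * min (Real.exp (t * X (k+1) ω)) (m:ℝ) ∂μ) := by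
        rw [← ofReal_integral_eq_lintegral_ofReal hint12
          (Filter.Eventually.of_forall fun ω => mul_nonneg
            (le_min (Real.exp_pos _).le (by positivity))
            (le_min (Real.exp_pos _).le (by positivity)))]
      rw [h2]
      exact ENNReal.ofReal_le_ofReal (key m)
    have hFnn : 0 ≤ᵐ[μ] fun ω => Real.exp (t * pSum X (k+1) ω) :=
      Filter.Eventually.of_forall fun ω => (Real.exp_pos _).le
    have hFint : Integrable (fun ω => Real.exp (t * pSum X (k+1) ω)) μ := by
      refine ⟨hFmeas.aestronglyMeasurable, ?_⟩
      rw [hasFiniteIntegral_iff_ofReal hFnn]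
      exact lt_of_le_of_lt hlin ENNReal.ofReal_lt_top
    refine ⟨hFint, ?_⟩
    have hIeq : ∫ ω, Real.exp (t * pSum X (k+1) ω) ∂μ =
        (∫⁻ ω, ENNReal.ofReal (Real.exp (t * pSum X (k+1) ω)) ∂μ).toReal :=
      integral_eq_lintegral_of_nonneg_ae hFnn hFmeas.aestronglyMeasurable
    have hIle : ∫ ω, Real.exp (t * pSum X (k+1) ω) ∂μ ≤ C := by
      rw [hIeq]
      calc (∫⁻ ω, ENNReal.ofReal (Real.exp (t * pSum X (k+1) ω)) ∂μ).toReal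
          ≤ (ENNReal.ofReal C).toReal := ENNReal.toReal_mono ENNReal.ofReal_ne_top hlin
        _ = C := ENNReal.toReal_ofReal hC0
    refine le_trans hIle ?_
    rw [hC, show Finset.Icc 1 (k+1) = insert (k+1) (Finset.Icc 1 k) by
      ext j; simp [Finset.mem_Icc, Finset.mem_insert]; omega]
    rw [Finset.prod_insert (by simp)]
    rw [mul_comm (∫ ω, Real.exp (t * X (k+1) ω) ∂μ)]
    exact mul_le_mul_of_nonneg_right ihLe (integral_nonneg fun ω => (Real.exp_pos _).le)

/-- Proposition 2.5, inequality (2.15): for `p > 1`, non-degenerate centered NA random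
variables with `K = ∑_{i=1}^n E[exp{a|X_i|^p}] < ∞`, `q` the conjugate exponent of `p` and
`τ > 0` with `(qτ)^{1/q}(pa)^{1/p} = 1`: for any `τ₁ > τ` there are `t₁, A > 0` with
`E[e^{tS_n}] ≤ exp{nτ₁t^q}` for `t ≥ t₁` and `E[e^{tS_n}] ≤ exp{nAt²}` for `0 ≤ t ≤ t₁`. -/
theorem stmt13 {Ω : Type*} [MeasurableSpace Ω] (μ : Measure Ω) [IsProbabilityMeasure μ]
    (X : ℕ → Ω → ℝ) (hmeas : ∀ i, Measurable (X i)) (hNA : NegAssoc μ X)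
    (hint : ∀ i, 1 ≤ i → Integrable (X i) μ)
    (hmean : ∀ i, 1 ≤ i → ∫ ω, X i ω ∂μ = 0)
    (hnondeg : ∀ i, 1 ≤ i → ¬ ∃ c : ℝ, X i =ᵐ[μ] fun _ => c)
    (p : ℝ) (hp : 1 < p) (n : ℕ) (hn : 1 ≤ n) (a : ℝ) (ha : 0 < a)
    (hK : ∀ i ∈ Finset.Icc 1 n, Integrable (fun ω => Real.exp (a * |X i ω| ^ p)) μ)
    (q τ : ℝ) (hq : q = p / (p - 1)) (hτ : 0 < τ)
    (hτeq : (q * τ) ^ (1 / q) * (p * a) ^ (1 / p) = 1)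
    (τ₁ : ℝ) (hτ₁ : τ < τ₁) :
    ∃ t₁ : ℝ, 0 < t₁ ∧ ∃ A : ℝ, 0 < A ∧
      (∀ t : ℝ, t₁ ≤ t →
        ∫ ω, Real.exp (t * pSum X n ω) ∂μ ≤ Real.exp ((n : ℝ) * τ₁ * t ^ q)) ∧
      (∀ t : ℝ, 0 ≤ t → t ≤ t₁ →
        ∫ ω, Real.exp (t * pSum X n ω) ∂μ ≤ Real.exp ((n : ℝ) * A * t ^ 2)) := by
  have hpq : p.HolderConjugate q := (Real.holderConjugate_iff_eq_conjExponent hp).mpr hq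
  have hq1 : 1 < q := hpq.symm.lt
  have hq0 : q ≠ 0 := by positivity
  -- the constant K
  set K : ℝ := ∑ i ∈ Finset.Icc 1 n, ∫ ω, Real.exp (a * |X i ω| ^ p) ∂μ with hKdef
  have hEnn : ∀ i ∈ Finset.Icc 1 n, (1:ℝ) ≤ ∫ ω, Real.exp (a * |X i ω| ^ p) ∂μ := by
    intro i hi
    have h1 : ∫ ω, (1:ℝ) ∂μ = 1 := by simp
    rw [← h1]
    refine integral_mono (integrable_const 1) (hK i hi) fun ω => ?_
    exact Real.one_le_exp (by positivity)
  have hKn : (n:ℝ) ≤ K := by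
    have := Finset.card_nsmul_le_sum (Finset.Icc 1 n)
      (fun i => ∫ ω, Real.exp (a * |X i ω| ^ p) ∂μ) 1 hEnn
    simpa [hKdef] using this
  have hK1 : (1:ℝ) ≤ K := le_trans (by exact_mod_cast hn) hKn
  have hKpos : (0:ℝ) < K := lt_of_lt_of_le one_pos hK1
  have hEleK : ∀ i ∈ Finset.Icc 1 n, ∫ ω, Real.exp (a * |X i ω| ^ p) ∂μ ≤ K := by
    intro i hi
    exact Finset.single_le_sum (f := fun i => ∫ ω, Real.exp (a * |X i ω| ^ p) ∂μ)
      (fun j _ => integral_nonneg fun ω => (Real.exp_pos _).le) hi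
  -- integrability of exp(t X i) for t ≥ 0
  have hgint : ∀ t : ℝ, 0 ≤ t → ∀ i ∈ Finset.Icc 1 n,
      Integrable (fun ω => Real.exp (t * X i ω)) μ := by
    intro t ht i hi
    refine ((hK i hi).const_mul (Real.exp (τ * t ^ q))).mono'
      ((measurable_const.mul (hmeas i)).exp).aestronglyMeasurable
      (Filter.Eventually.of_forall fun ω => ?_)
    rw [Real.norm_eq_abs, abs_of_nonneg (Real.exp_pos _).le, ← Real.exp_add]
    exact Real.exp_le_exp.mpr (by
      have := youngB hp ha hτ hq hτeq ht (X i ω)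
      linarith)
  -- the bound for large t
  have hglarge : ∀ t : ℝ, 0 ≤ t → ∀ i ∈ Finset.Icc 1 n,
      ∫ ω, Real.exp (t * X i ω) ∂μ ≤ Real.exp (τ * t ^ q) * K := by
    intro t ht i hi
    have h1 : ∫ ω, Real.exp (t * X i ω) ∂μ ≤
        ∫ ω, Real.exp (τ * t ^ q) * Real.exp (a * |X i ω| ^ p) ∂μ := by
      refine integral_mono (hgint t ht i hi) ((hK i hi).const_mul _) fun ω => ?_
      rw [← Real.exp_add]
      refine Real.exp_le_exp.mpr ?_
      have := youngB hp ha hτ hq hτeq ht (X i ω)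
      linarith
    rw [integral_const_mul] at h1
    refine le_trans h1 ?_
    exact mul_le_mul_of_nonneg_left (hEleK i hi) (Real.exp_pos _).le
  -- choose t₁
  set L : ℝ := max 0 (Real.log K / (τ₁ - τ)) with hL
  set t₁ : ℝ := max 1 (L ^ (1/q)) with ht₁def
  have ht₁pos : (0:ℝ) < t₁ := lt_of_lt_of_le one_pos (le_max_left _ _)
  -- constant C for small t
  obtain ⟨C, hC1, hCbound⟩ := sqExpBound hp ha ht₁pos
  refine ⟨t₁, ht₁pos, C * K, by positivity, ?_, ?_⟩
  · -- large t
    intro t htt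
    have ht1 : (1:ℝ) ≤ t := le_trans (le_max_left _ _) htt
    have ht : (0:ℝ) ≤ t := by linarith
    have hmain := (na_mgf μ X hmeas hNA ht n (hgint t ht) n le_rfl).2
    have hprod : ∏ i ∈ Finset.Icc 1 n, ∫ ω, Real.exp (t * X i ω) ∂μ ≤
        (Real.exp (τ * t ^ q) * K) ^ n := by
      have := Finset.prod_le_prod (s := Finset.Icc 1 n)
        (f := fun i => ∫ ω, Real.exp (t * X i ω) ∂μ)
        (g := fun _ => Real.exp (τ * t ^ q) * K)
        (fun i _ => integral_nonneg fun ω => (Real.exp_pos _).le)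
        (fun i hi => hglarge t ht i hi)
      simpa using this
    -- K ≤ exp((τ₁ - τ) t^q)
    have hτd : (0:ℝ) < τ₁ - τ := by linarith
    have htq : L ≤ t ^ q := by
      have h1 : L ^ (1/q) ≤ t₁ := le_max_right _ _
      have h2 : t₁ ≤ t := htt
      have hL0 : (0:ℝ) ≤ L := le_max_left _ _
      have h3 : (L ^ (1/q)) ^ q ≤ t ^ q :=
        Real.rpow_le_rpow (Real.rpow_nonneg hL0 _) (le_trans h1 h2) (by positivity)
      rwa [← Real.rpow_mul hL0, one_div_mul_cancel hq0, Real.rpow_one] at h3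
    have hKle : K ≤ Real.exp ((τ₁ - τ) * t ^ q) := by
      rw [← Real.log_le_iff_le_exp hKpos]
      have h1 : Real.log K / (τ₁ - τ) ≤ L := le_max_right _ _
      have h2 : Real.log K / (τ₁ - τ) ≤ t ^ q := le_trans h1 htq
      calc Real.log K = (Real.log K / (τ₁ - τ)) * (τ₁ - τ) := by field_simp
        _ ≤ t ^ q * (τ₁ - τ) := mul_le_mul_of_nonneg_right h2 hτd.le
        _ = (τ₁ - τ) * t ^ q := by ring
    have hfin : (Real.exp (τ * t ^ q) * K) ^ n ≤ Real.exp ((n:ℝ) * τ₁ * t ^ q) := by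
      have h1 : Real.exp (τ * t ^ q) * K ≤ Real.exp (τ₁ * t ^ q) := by
        calc Real.exp (τ * t ^ q) * K ≤
            Real.exp (τ * t ^ q) * Real.exp ((τ₁ - τ) * t ^ q) :=
              mul_le_mul_of_nonneg_left hKle (Real.exp_pos _).le
          _ = Real.exp (τ₁ * t ^ q) := by rw [← Real.exp_add]; ring_nf
      calc (Real.exp (τ * t ^ q) * K) ^ n ≤ (Real.exp (τ₁ * t ^ q)) ^ n :=
            pow_le_pow_left₀ (by positivity) h1 n
        _ = Real.exp ((n:ℝ) * (τ₁ * t ^ q)) := (Real.exp_nat_mul _ n).symm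
        _ = Real.exp ((n:ℝ) * τ₁ * t ^ q) := by ring_nf
    exact le_trans hmain (le_trans hprod hfin)
  · -- small t
    intro t ht htt
    have hmain := (na_mgf μ X hmeas hNA ht n (hgint t ht) n le_rfl).2
    have hgsmall : ∀ i ∈ Finset.Icc 1 n,
        ∫ ω, Real.exp (t * X i ω) ∂μ ≤ Real.exp (C * K * t ^ 2) := by
      intro i hi
      have hi1 : 1 ≤ i := by simp [Finset.mem_Icc] at hi; omega
      -- pointwise: exp(tx) ≤ 1 + t x + t² C exp(a|x|^p)
      have hpt : ∀ ω, Real.exp (t * X i ω) ≤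
          1 + t * X i ω + t ^ 2 * C * Real.exp (a * |X i ω| ^ p) := by
        intro ω
        have h1 := expA (t * X i ω)
        have h2 : |t * X i ω| = t * |X i ω| := by
          rw [abs_mul, abs_of_nonneg ht]
        have h3 : (t * X i ω) ^ 2 * Real.exp |t * X i ω| =
            t ^ 2 * ((X i ω) ^ 2 * Real.exp (t * |X i ω|)) := by
          rw [h2]; ring
        have h4 : (X i ω) ^ 2 * Real.exp (t * |X i ω|) ≤
            C * Real.exp (a * |X i ω| ^ p) := hCbound t (X i ω) ht htt
        have h5 : t ^ 2 * ((X i ω) ^ 2 * Real.exp (t * |X i ω|)) ≤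
            t ^ 2 * (C * Real.exp (a * |X i ω| ^ p)) :=
          mul_le_mul_of_nonneg_left h4 (by positivity)
        calc Real.exp (t * X i ω) ≤ 1 + t * X i ω +
              (t * X i ω) ^ 2 * Real.exp |t * X i ω| := h1
          _ = 1 + t * X i ω + t ^ 2 * ((X i ω) ^ 2 * Real.exp (t * |X i ω|)) := by rw [h3]
          _ ≤ 1 + t * X i ω + t ^ 2 * (C * Real.exp (a * |X i ω| ^ p)) := by linarith
          _ = 1 + t * X i ω + t ^ 2 * C * Real.exp (a * |X i ω| ^ p) := by ring
      have hrhsint : Integrable (fun ω =>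
          1 + t * X i ω + t ^ 2 * C * Real.exp (a * |X i ω| ^ p)) μ :=
        (((integrable_const 1).add ((hint i hi1).const_mul t)).add ((hK i hi).const_mul _))
      have h6 : ∫ ω, Real.exp (t * X i ω) ∂μ ≤
          ∫ ω, (1 + t * X i ω + t ^ 2 * C * Real.exp (a * |X i ω| ^ p)) ∂μ :=
        integral_mono (hgint t ht i hi) hrhsint hpt
      have hA1 : Integrable (fun ω => 1 + t * X i ω) μ :=
        (integrable_const 1).add ((hint i hi1).const_mul t)
      have e1 : ∫ ω, ((1 + t * X i ω) + t ^ 2 * C * Real.exp (a * |X i ω| ^ p)) ∂μ =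
          (∫ ω, (1 + t * X i ω) ∂μ) + ∫ ω, t ^ 2 * C * Real.exp (a * |X i ω| ^ p) ∂μ :=
        integral_add hA1 ((hK i hi).const_mul _)
      have e2 : ∫ ω, (1 + t * X i ω) ∂μ = 1 + t * ∫ ω, X i ω ∂μ := by
        rw [integral_add (integrable_const 1) ((hint i hi1).const_mul t),
          integral_const_mul]
        simp
      have h7 : ∫ ω, (1 + t * X i ω + t ^ 2 * C * Real.exp (a * |X i ω| ^ p)) ∂μ =
          1 + t ^ 2 * C * ∫ ω, Real.exp (a * |X i ω| ^ p) ∂μ := by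
        rw [e1, e2, hmean i hi1, integral_const_mul]
        ring
      have h8 : 1 + t ^ 2 * C * ∫ ω, Real.exp (a * |X i ω| ^ p) ∂μ ≤
          1 + C * K * t ^ 2 := by
        have h0 : (0:ℝ) ≤ t ^ 2 * C := by positivity
        have h1 := mul_le_mul_of_nonneg_left (hEleK i hi) h0
        nlinarith [h1]
      have h9 : 1 + C * K * t ^ 2 ≤ Real.exp (C * K * t ^ 2) := by
        linarith [Real.add_one_le_exp (C * K * t ^ 2)]
      rw [h7] at h6
      linarith
    have hprod : ∏ i ∈ Finset.Icc 1 n, ∫ ω, Real.exp (t * X i ω) ∂μ ≤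
        (Real.exp (C * K * t ^ 2)) ^ n := by
      have := Finset.prod_le_prod (s := Finset.Icc 1 n)
        (f := fun i => ∫ ω, Real.exp (t * X i ω) ∂μ)
        (g := fun _ => Real.exp (C * K * t ^ 2))
        (fun i _ => integral_nonneg fun ω => (Real.exp_pos _).le)
        (fun i hi => hgsmall i hi)
      simpa using this
    have hfin : (Real.exp (C * K * t ^ 2)) ^ n = Real.exp ((n:ℝ) * (C * K) * t ^ 2) := by
      rw [← Real.exp_nat_mul]; ring_nf
    exact le_trans hmain (le_trans hprod (le_of_eq hfin))
end
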